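/- arXiv:math/0602059 — 3 statements merged into one kernel-verified Lean document; each statement's English description precedes it below -/
import Mathlib

section
/- Let G be a weighted digraph on n vertices with positive arc weights and Kirchhoff matrix L. For every τ > 0 the matrix I + τL is invertible, and the (i,j) entry of (I + τL)^{-1} equals (∑_{k=0}^{n-v} τ^k ε(F_k^{j→i})) / (∑_{k=0}^{n-v} τ^k ε(F_k)), where F_k is the set of spanning diverging forests of G with k arcs, F_k^{j→i} is the subset of those in which i belongs to the tree diverging from j, ε denotes the total weight (sum over forests of the product of arc weights), and v is the forest dimension of G. -/
open scoped Classical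
open Finset

variable {n : ℕ}

/-- The arc relation of a finite arc set. -/
def arcRel (F : Finset (Fin n × Fin n)) : Fin n → Fin n → Prop :=
  fun a b => (a, b) ∈ F

/-- A diverging forest: no directed cycles, and every vertex has in-degree at most 1. -/
def IsDivForest (F : Finset (Fin n × Fin n)) : Prop :=
  (∀ v, ¬ Relation.TransGen (arcRel F) v v) ∧
  ∀ w z₁ z₂, (z₁, w) ∈ F → (z₂, w) ∈ F → z₁ = z₂

/-- `F` is a spanning diverging forest of the weighted digraph whose arcs are the
pairs of positive weight under `ε`. -/
def IsSpForest (ε : Fin n → Fin n → ℝ) (F : Finset (Fin n × Fin n)) : Prop :=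
  (∀ p ∈ F, 0 < ε p.1 p.2) ∧ IsDivForest F

/-- The weight of a forest: the product of its arc weights. -/
noncomputable def fweight (ε : Fin n → Fin n → ℝ) (F : Finset (Fin n × Fin n)) : ℝ :=
  ∏ p ∈ F, ε p.1 p.2

/-- The weight of a set of forests: the sum of the weights of its members. -/
noncomputable def swt (ε : Fin n → Fin n → ℝ)
    (S : Finset (Finset (Fin n × Fin n))) : ℝ :=
  ∑ F ∈ S, fweight ε F

/-- The set of spanning diverging forests with `k` arcs. -/
noncomputable def forestsK (ε : Fin n → Fin n → ℝ) (k : ℕ) :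
    Finset (Finset (Fin n × Fin n)) :=
  Finset.univ.filter (fun F => IsSpForest ε F ∧ F.card = k)

/-- The set of spanning diverging forests with `k` arcs in which vertex `i` belongs to
the tree diverging from `j` (so `j` is a root and `i` is reachable from `j`). -/
noncomputable def forestsKji (ε : Fin n → Fin n → ℝ) (k : ℕ) (j i : Fin n) :
    Finset (Finset (Fin n × Fin n)) :=
  (forestsK ε k).filter (fun F => (∀ u, (u, j) ∉ F) ∧ Relation.ReflTransGen (arcRel F) j i)

/-- The maximum number of arcs in a spanning diverging forest, equal to `n - v`
where `v` is the forest dimension. -/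
noncomputable def maxArcs (ε : Fin n → Fin n → ℝ) : ℕ :=
  (Finset.univ.filter (fun F : Finset (Fin n × Fin n) => IsSpForest ε F)).sup Finset.card

/-- The Kirchhoff matrix of the weighted digraph with weights `ε`. -/
noncomputable def Kirchhoff (ε : Fin n → Fin n → ℝ) : Matrix (Fin n) (Fin n) ℝ :=
  Matrix.of fun i j =>
    if i = j then ∑ k ∈ Finset.univ.filter (· ≠ i), ε k i else - ε j i

/-- The matrix of maximum out forests: entry `(i, j)` is the total weight of maximum
out forests in which `i` lies in the tree diverging from `j`. -/
noncomputable def Qmax (ε : Fin n → Fin n → ℝ) : Matrix (Fin n) (Fin n) ℝ :=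
  Matrix.of fun i j => swt ε (forestsKji ε (maxArcs ε) j i)

/-- The normalized matrix of maximum out forests. -/
noncomputable def Jbar (ε : Fin n → Fin n → ℝ) : Matrix (Fin n) (Fin n) ℝ :=
  (swt ε (forestsK ε (maxArcs ε)))⁻¹ • Qmax ε

section Aux

variable {F F' : Finset (Fin n × Fin n)} {x y z m v i j p : Fin n}

/-- Reachability in an arc set. -/
abbrev Rch (F : Finset (Fin n × Fin n)) : Fin n → Fin n → Prop :=
  Relation.ReflTransGen (arcRel F)

lemma rch_mono (h : F ⊆ F') (hxy : Rch F x y) : Rch F' x y :=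
  Relation.ReflTransGen.mono (fun _ _ hab => h hab) _ _ hxy

lemma divForest_subset (h : F' ⊆ F) (hF : IsDivForest F) : IsDivForest F' :=
  ⟨fun v hv => hF.1 v (Relation.TransGen.mono (fun _ _ hab => h hab) _ _ hv),
   fun w z₁ z₂ h1 h2 => hF.2 w z₁ z₂ (h h1) (h h2)⟩

lemma spForest_subset {ε : Fin n → Fin n → ℝ} (h : F' ⊆ F) (hF : IsSpForest ε F) :
    IsSpForest ε F' := ⟨fun p hp => hF.1 p (h hp), divForest_subset h hF.2⟩

lemma no_loop (hF : IsDivForest F) : (x, x) ∉ F := fun h =>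
  hF.1 x (Relation.TransGen.single h)

lemma rch_tail (hxy : Rch F x y) (hne : x ≠ y) : ∃ z, Rch F x z ∧ (z, y) ∈ F := by
  rcases hxy.cases_tail with h | ⟨z, h1, h2⟩
  · exact absurd h (fun e => hne e.symm)
  · exact ⟨z, h1, h2⟩

/-- The parent of a vertex in a forest. -/
noncomputable def par (F : Finset (Fin n × Fin n)) (i : Fin n) : Fin n :=
  if h : ∃ z, (z, i) ∈ F then h.choose else i

lemma par_mem (h : ∃ z, (z, i) ∈ F) : (par F i, i) ∈ F := by
  rw [par, dif_pos h]; exact h.choose_spec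

lemma par_eq (hF : IsDivForest F) (h : (z, i) ∈ F) : par F i = z :=
  hF.2 i _ z (par_mem ⟨z, h⟩) h

lemma rch_parent (hF : IsDivForest F) (h : Rch F x i) (hxi : x ≠ i) (hz : (z, i) ∈ F) :
    Rch F x z := by
  obtain ⟨w, h1, h2⟩ := rch_tail h hxi
  rwa [hF.2 i z w hz h2]

lemma not_rch_of_arc (hF : IsDivForest F) (hp : (p, i) ∈ F) : ¬ Rch F i p := fun h =>
  hF.1 i (Relation.TransGen.tail' h hp)

lemma rch_comparable (hF : IsDivForest F) {a b c : Fin n} (hac : Rch F a c)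
    (hbc : Rch F b c) : Rch F a b ∨ Rch F b a := by
  induction hbc using Relation.ReflTransGen.head_induction_on with
  | refl => exact Or.inl hac
  | head harc hrest ih =>
    rename_i b' d
    rcases ih with h | h
    · by_cases had : a = d
      · exact Or.inr (had ▸ Relation.ReflTransGen.single harc)
      · exact Or.inl (rch_parent hF h had harc)
    · exact Or.inr (Relation.ReflTransGen.head harc h)

lemma eq_of_root_rch (hroot : ∀ u, (u, i) ∉ F) (h : Rch F j i) : j = i := by
  by_contra hne
  obtain ⟨z, _, hz⟩ := rch_tail h hne
  exact hroot z hz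

lemma roots_eq (hF : IsDivForest F) (hj : ∀ u, (u, j) ∉ F) (hi : ∀ u, (u, i) ∉ F)
    (h1 : Rch F j m) (h2 : Rch F i m) : j = i := by
  rcases rch_comparable hF h1 h2 with h | h
  · exact eq_of_root_rch hi h
  · exact (eq_of_root_rch hj h).symm

lemma rch_insert_cases (h : Rch (insert (m, v) F) x y) :
    Rch F x y ∨ (Rch F x m ∧ Rch F v y) := by
  induction h with
  | refl => exact Or.inl Relation.ReflTransGen.refl
  | tail hxz harc ih =>
    rename_i z y'
    rcases Finset.mem_insert.mp harc with he | hmem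
    · simp only [Prod.mk.injEq] at he
      obtain ⟨h1, h2⟩ := he
      subst h1; subst h2
      rcases ih with h | ⟨h, _⟩
      · exact Or.inr ⟨h, Relation.ReflTransGen.refl⟩
      · exact Or.inr ⟨h, Relation.ReflTransGen.refl⟩
    · rcases ih with h | ⟨h1, h2⟩
      · exact Or.inl (h.tail hmem)
      · exact Or.inr ⟨h1, h2.tail hmem⟩

lemma rch_erase_cases {a : Fin n × Fin n} (h : Rch F x y) :
    Rch (F.erase a) x y ∨ Rch (F.erase a) a.2 y := by
  induction h with
  | refl => exact Or.inl Relation.ReflTransGen.refl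
  | tail hxz harc ih =>
    rename_i z y'
    by_cases he : (z, y') = a
    · exact Or.inr (he ▸ Relation.ReflTransGen.refl)
    · have hmem : (z, y') ∈ F.erase a := Finset.mem_erase.mpr ⟨he, harc⟩
      rcases ih with h | h
      · exact Or.inl (h.tail hmem)
      · exact Or.inr (h.tail hmem)

lemma divForest_insert (hF : IsDivForest F) (hroot : ∀ u, (u, v) ∉ F)
    (hnr : ¬ Rch F v m) (hmv : m ≠ v) : IsDivForest (insert (m, v) F) := by
  constructor
  · intro u hu
    obtain ⟨b, hub, hbu⟩ := Relation.TransGen.tail'_iff.mp hu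
    rcases Finset.mem_insert.mp hbu with he | hmem
    · simp only [Prod.mk.injEq] at he
      obtain ⟨h1, h2⟩ := he
      subst h1; subst h2
      rcases rch_insert_cases hub with h | ⟨h, _⟩
      · exact hnr h
      · exact hnr h
    · rcases rch_insert_cases hub with h | ⟨h1, h2⟩
      · exact hF.1 u (Relation.TransGen.tail' h hmem)
      · exact hnr ((h2.tail hmem).trans h1)
  · intro w z₁ z₂ h1 h2
    rcases Finset.mem_insert.mp h1 with he1 | hm1 <;> rcases Finset.mem_insert.mp h2 with he2 | hm2
    · simp only [Prod.mk.injEq] at he1 he2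
      rw [he1.1, he2.1]
    · simp only [Prod.mk.injEq] at he1
      exact absurd hm2 (he1.2 ▸ hroot z₂)
    · simp only [Prod.mk.injEq] at he2
      exact absurd hm1 (he2.2 ▸ hroot z₁)
    · exact hF.2 w z₁ z₂ hm1 hm2

end Aux
section Aux2

variable {ε : Fin n → Fin n → ℝ} {F : Finset (Fin n × Fin n)} {k : ℕ} {i j m : Fin n}

lemma mem_forestsK : F ∈ forestsK ε k ↔ IsSpForest ε F ∧ F.card = k := by
  simp [forestsK]

lemma mem_forestsKji : F ∈ forestsKji ε k j i ↔
    (IsSpForest ε F ∧ F.card = k) ∧ (∀ u, (u, j) ∉ F) ∧ Rch F j i := by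
  simp [forestsKji, mem_forestsK]

lemma fweight_insert {a : Fin n × Fin n} (h : a ∉ F) :
    fweight ε (insert a F) = ε a.1 a.2 * fweight ε F := by
  rw [fweight, fweight, Finset.prod_insert h]

lemma fweight_erase_mul {a : Fin n × Fin n} (h : a ∈ F) :
    ε a.1 a.2 * fweight ε (F.erase a) = fweight ε F := by
  rw [fweight, fweight]
  exact Finset.mul_prod_erase F (fun p => ε p.1 p.2) h

lemma spForest_empty : IsSpForest ε (∅ : Finset (Fin n × Fin n)) := by
  refine ⟨fun p hp => absurd hp (Finset.notMem_empty p), ?_, ?_⟩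
  · intro v hv
    obtain ⟨b, _, hb⟩ := Relation.TransGen.tail'_iff.mp hv
    exact absurd hb (Finset.notMem_empty _)
  · intro w z₁ z₂ h1 _
    exact absurd h1 (Finset.notMem_empty _)

lemma forestsK_zero : forestsK ε 0 = {∅} := by
  ext F
  simp only [mem_forestsK, Finset.mem_singleton, Finset.card_eq_zero]
  constructor
  · rintro ⟨_, h⟩; exact h
  · rintro rfl; exact ⟨spForest_empty, rfl⟩

lemma swt_forestsK_zero : swt ε (forestsK ε 0) = 1 := by
  rw [forestsK_zero, swt, Finset.sum_singleton, fweight, Finset.prod_empty]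

lemma rch_empty (h : Rch (∅ : Finset (Fin n × Fin n)) j i) : j = i :=
  eq_of_root_rch (fun u => Finset.notMem_empty (u, i)) h

lemma forestsKji_zero : forestsKji ε 0 j i = if i = j then {∅} else ∅ := by
  ext F
  simp only [mem_forestsKji, Finset.card_eq_zero]
  split
  · rename_i hij
    subst hij
    simp only [Finset.mem_singleton]
    constructor
    · rintro ⟨⟨_, h⟩, _⟩; exact h
    · rintro rfl
      exact ⟨⟨spForest_empty, rfl⟩, fun u => Finset.notMem_empty _, Relation.ReflTransGen.refl⟩
  · rename_i hij
    simp only [Finset.notMem_empty, iff_false, not_and]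
    rintro ⟨_, rfl⟩ _ hrch
    exact hij (rch_empty hrch).symm

lemma swt_forestsKji_zero : swt ε (forestsKji ε 0 j i) = if i = j then 1 else 0 := by
  rw [forestsKji_zero]
  split
  · rw [swt, Finset.sum_singleton, fweight, Finset.prod_empty]
  · rw [swt, Finset.sum_empty]

lemma card_le_maxArcs (h : IsSpForest ε F) : F.card ≤ maxArcs ε :=
  Finset.le_sup (Finset.mem_filter.mpr ⟨Finset.mem_univ F, h⟩)

lemma forestsK_top : forestsK ε (maxArcs ε + 1) = ∅ := by
  ext F
  simp only [mem_forestsK, Finset.notMem_empty, iff_false, not_and]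
  intro h hc
  exact absurd (card_le_maxArcs h) (by omega)

lemma swt_nonneg {S : Finset (Finset (Fin n × Fin n))}
    (h : ∀ F ∈ S, IsSpForest ε F) : 0 ≤ swt ε S := by
  refine Finset.sum_nonneg fun F hF => Finset.prod_nonneg fun p hp => le_of_lt ((h F hF).1 p hp)

end Aux2
section Aux3

variable {ε : Fin n → Fin n → ℝ} {k : ℕ} {i j : Fin n}

/-- Forests of size `k+1` where `j` is not a root correspond to pairs of an arc `(m,j)`
and a forest of size `k` where `j` is a root not reaching `m`. -/
lemma bij_root (k : ℕ) (j : Fin n) :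
    ∑ F ∈ (forestsK ε (k+1)).filter (fun F => ¬ ∀ u, (u, j) ∉ F), fweight ε F
      = ∑ x ∈ (Finset.univ.filter (fun m => m ≠ j ∧ 0 < ε m j)).sigma
          (fun m => (forestsK ε k).filter
            (fun F => (∀ u, (u, j) ∉ F) ∧ ¬ Relation.ReflTransGen (arcRel F) j m)), ε x.1 j * fweight ε x.2 := by
  refine Finset.sum_bij' (fun F hF => ⟨par F j, F.erase (par F j, j)⟩)
    (fun x hx => insert (x.1, j) x.2) ?_ ?_ ?_ ?_ ?_
  · -- forward membership
    intro F hF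
    simp only [Finset.mem_filter, mem_forestsK] at hF
    obtain ⟨⟨hsp, hcard⟩, hnr⟩ := hF
    push_neg at hnr
    obtain ⟨u, hu⟩ := hnr
    have hex : ∃ z, (z, j) ∈ F := ⟨u, hu⟩
    have hp : (par F j, j) ∈ F := par_mem hex
    simp only [Finset.mem_sigma, Finset.mem_filter, Finset.mem_univ, mem_forestsK, true_and]
    refine ⟨⟨fun h => no_loop hsp.2 (h ▸ hp), hsp.1 _ hp⟩,
      ⟨spForest_subset (Finset.erase_subset _ _) hsp, by rw [Finset.card_erase_of_mem hp, hcard]; omega⟩,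
      ?_, ?_⟩
    · intro u' hu'
      have := Finset.mem_erase.mp hu'
      exact this.1 (hsp.2.2 j u' (par F j) this.2 hp ▸ rfl)
    · intro hr
      exact not_rch_of_arc hsp.2 hp (rch_mono (Finset.erase_subset _ _) hr)
  · -- backward membership
    rintro ⟨m, F⟩ hx
    simp only [Finset.mem_sigma, Finset.mem_filter, Finset.mem_univ, mem_forestsK,
      true_and] at hx
    obtain ⟨⟨hmj, hmw⟩, ⟨hsp, hcard⟩, hroot, hnr⟩ := hx
    have hnm : (m, j) ∉ F := hroot m
    simp only [Finset.mem_filter, mem_forestsK]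
    refine ⟨⟨⟨?_, divForest_insert hsp.2 hroot hnr hmj⟩,
      by rw [Finset.card_insert_of_notMem hnm, hcard]⟩, ?_⟩
    · intro q hq
      rcases Finset.mem_insert.mp hq with he | hmem
      · rw [he]; exact hmw
      · exact hsp.1 q hmem
    · push_neg
      exact ⟨m, Finset.mem_insert_self _ _⟩
  · -- left inverse
    intro F hF
    simp only [Finset.mem_filter, mem_forestsK] at hF
    obtain ⟨⟨hsp, hcard⟩, hnr⟩ := hF
    push_neg at hnr
    exact Finset.insert_erase (par_mem hnr)
  · -- right inverse
    rintro ⟨m, F⟩ hx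
    simp only [Finset.mem_sigma, Finset.mem_filter, Finset.mem_univ, mem_forestsK,
      true_and] at hx
    obtain ⟨⟨hmj, hmw⟩, ⟨hsp, hcard⟩, hroot, hnr⟩ := hx
    have hforest : IsDivForest (insert (m, j) F) := divForest_insert hsp.2 hroot hnr hmj
    have hpar : par (insert (m, j) F) j = m := par_eq hforest (Finset.mem_insert_self _ _)
    simp only [hpar]
    rw [Finset.erase_insert (hroot m)]
  · -- weights
    intro F hF
    simp only [Finset.mem_filter, mem_forestsK] at hF
    obtain ⟨⟨hsp, hcard⟩, hnr⟩ := hF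
    push_neg at hnr
    exact (fweight_erase_mul (par_mem hnr)).symm

end Aux3
section Aux4

variable {ε : Fin n → Fin n → ℝ}

/-- Forests of size `k+1` where `j` is a root and `i ≠ j` is in `j`'s tree correspond to
pairs of an arc `(m,i)` and a forest of size `k` where `j` is a root reaching `m`
and `i` is a root. -/
lemma bij_attach (k : ℕ) {i j : Fin n} (hij : i ≠ j) :
    ∑ F ∈ forestsKji ε (k+1) j i, fweight ε F
      = ∑ x ∈ (Finset.univ.filter (fun m => m ≠ i ∧ 0 < ε m i)).sigma
          (fun m => (forestsK ε k).filter
            (fun F => (∀ u, (u, j) ∉ F) ∧ Relation.ReflTransGen (arcRel F) j m ∧ ∀ u, (u, i) ∉ F)),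
          ε x.1 i * fweight ε x.2 := by
  refine Finset.sum_bij' (fun F hF => ⟨par F i, F.erase (par F i, i)⟩)
    (fun x hx => insert (x.1, i) x.2) ?_ ?_ ?_ ?_ ?_
  · -- forward membership
    intro F hF
    rw [mem_forestsKji] at hF
    obtain ⟨⟨hsp, hcard⟩, hroot, hrch⟩ := hF
    obtain ⟨z, hjz, hz⟩ := rch_tail hrch (Ne.symm hij)
    have hex : ∃ z, (z, i) ∈ F := ⟨z, hz⟩
    have hp : (par F i, i) ∈ F := par_mem hex
    have hpz : par F i = z := par_eq hsp.2 hz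
    simp only [Finset.mem_sigma, Finset.mem_filter, Finset.mem_univ, mem_forestsK, true_and]
    refine ⟨⟨fun h => no_loop hsp.2 (h ▸ hp), hsp.1 _ hp⟩,
      ⟨spForest_subset (Finset.erase_subset _ _) hsp,
        by rw [Finset.card_erase_of_mem hp, hcard]; omega⟩, ?_, ?_, ?_⟩
    · intro u hu
      exact hroot u (Finset.mem_erase.mp hu).2
    · -- Rch (erase) j (par F i)
      rcases rch_erase_cases (a := (par F i, i)) (hpz ▸ hjz) with h | h
      · exact h
      · exact absurd (rch_mono (Finset.erase_subset _ _) h)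
          (not_rch_of_arc hsp.2 hp)
    · intro u hu
      have := Finset.mem_erase.mp hu
      exact this.1 (hsp.2.2 i u (par F i) this.2 hp ▸ rfl)
  · -- backward membership
    rintro ⟨m, F⟩ hx
    simp only [Finset.mem_sigma, Finset.mem_filter, Finset.mem_univ, mem_forestsK,
      true_and] at hx
    obtain ⟨⟨hmi, hmw⟩, ⟨hsp, hcard⟩, hrootj, hrchm, hrooti⟩ := hx
    have hnm : (m, i) ∉ F := hrooti m
    have hnr : ¬ Relation.ReflTransGen (arcRel F) i m := fun h => hij (roots_eq hsp.2 hrooti hrootj h hrchm)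
    rw [mem_forestsKji]
    refine ⟨⟨⟨?_, divForest_insert hsp.2 hrooti hnr hmi⟩,
      by rw [Finset.card_insert_of_notMem hnm, hcard]⟩, ?_, ?_⟩
    · intro q hq
      rcases Finset.mem_insert.mp hq with he | hmem
      · rw [he]; exact hmw
      · exact hsp.1 q hmem
    · intro u hu
      rcases Finset.mem_insert.mp hu with he | hmem
      · simp only [Prod.mk.injEq] at he
        exact hij he.2.symm
      · exact hrootj u hmem
    · exact (rch_mono (Finset.subset_insert _ _) hrchm).tail (Finset.mem_insert_self _ _)
  · -- left inverse
    intro F hF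
    rw [mem_forestsKji] at hF
    obtain ⟨⟨hsp, hcard⟩, hroot, hrch⟩ := hF
    obtain ⟨z, hjz, hz⟩ := rch_tail hrch (Ne.symm hij)
    exact Finset.insert_erase (par_mem ⟨z, hz⟩)
  · -- right inverse
    rintro ⟨m, F⟩ hx
    simp only [Finset.mem_sigma, Finset.mem_filter, Finset.mem_univ, mem_forestsK,
      true_and] at hx
    obtain ⟨⟨hmi, hmw⟩, ⟨hsp, hcard⟩, hrootj, hrchm, hrooti⟩ := hx
    have hnr : ¬ Relation.ReflTransGen (arcRel F) i m := fun h => hij (roots_eq hsp.2 hrooti hrootj h hrchm)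
    have hforest : IsDivForest (insert (m, i) F) := divForest_insert hsp.2 hrooti hnr hmi
    have hpar : par (insert (m, i) F) i = m := par_eq hforest (Finset.mem_insert_self _ _)
    simp only [hpar]
    rw [Finset.erase_insert (hrooti m)]
  · -- weights
    intro F hF
    rw [mem_forestsKji] at hF
    obtain ⟨⟨hsp, hcard⟩, hroot, hrch⟩ := hF
    obtain ⟨z, hjz, hz⟩ := rch_tail hrch (Ne.symm hij)
    exact (fweight_erase_mul (par_mem ⟨z, hz⟩)).symm

end Aux4
section Aux5

variable {ε : Fin n → Fin n → ℝ}

/-- The reparenting involution between pairs `(m, F)` with `i` in `j`'s tree and `m`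
outside `j`'s tree, and pairs `(m', F')` with `m'` in `j`'s tree and `i` in some
other tree (not a root). -/
lemma bij_swap (k : ℕ) {i j : Fin n} (hij : i ≠ j) :
    ∑ x ∈ (Finset.univ.filter (fun m => m ≠ i ∧ 0 < ε m i)).sigma
        (fun m => (forestsK ε k).filter
          (fun F => (∀ u, (u, j) ∉ F) ∧ Relation.ReflTransGen (arcRel F) j i ∧ ¬ Relation.ReflTransGen (arcRel F) j m)),
        ε x.1 i * fweight ε x.2
      = ∑ x ∈ (Finset.univ.filter (fun m => m ≠ i ∧ 0 < ε m i)).sigma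
          (fun m => (forestsK ε k).filter
            (fun F => (∀ u, (u, j) ∉ F) ∧ Relation.ReflTransGen (arcRel F) j m ∧ ¬ Relation.ReflTransGen (arcRel F) j i ∧ ¬ ∀ u, (u, i) ∉ F)),
          ε x.1 i * fweight ε x.2 := by
  refine Finset.sum_bij'
    (fun x hx => ⟨par x.2 i, insert (x.1, i) (x.2.erase (par x.2 i, i))⟩)
    (fun x hx => ⟨par x.2 i, insert (x.1, i) (x.2.erase (par x.2 i, i))⟩)
    ?_ ?_ ?_ ?_ ?_
  · -- X → Y membership
    rintro ⟨m, F⟩ hx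
    simp only [Finset.mem_sigma, Finset.mem_filter, Finset.mem_univ, mem_forestsK,
      true_and] at hx ⊢
    obtain ⟨⟨hmi, hmw⟩, ⟨hsp, hcard⟩, hrootj, hrchi, hnrchm⟩ := hx
    obtain ⟨z, hjz, hz⟩ := rch_tail hrchi (Ne.symm hij)
    have hp : (par F i, i) ∈ F := par_mem ⟨z, hz⟩
    have hpz : par F i = z := par_eq hsp.2 hz
    set p := par F i with hpdef
    set F1 := F.erase (p, i) with hF1
    have hF1sub : F1 ⊆ F := Finset.erase_subset _ _
    have hF1sp : IsSpForest ε F1 := spForest_subset hF1sub hsp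
    have hrooti1 : ∀ u, (u, i) ∉ F1 := by
      intro u hu
      have := Finset.mem_erase.mp hu
      exact this.1 (hsp.2.2 i u p this.2 hp ▸ rfl)
    have hnrim : ¬ Relation.ReflTransGen (arcRel F1) i m := by
      intro h
      exact hnrchm (hrchi.trans (rch_mono hF1sub h))
    have hforest2 : IsDivForest (insert (m, i) F1) :=
      divForest_insert hF1sp.2 hrooti1 hnrim hmi
    have hni : (m, i) ∉ F1 := hrooti1 m
    refine ⟨⟨fun h => no_loop hsp.2 (h ▸ hp), hsp.1 _ hp⟩,
      ⟨⟨?_, hforest2⟩, ?_⟩, ?_, ?_, ?_, ?_⟩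
    · intro q hq
      rcases Finset.mem_insert.mp hq with he | hmem
      · rw [he]; exact hmw
      · exact hsp.1 q (hF1sub hmem)
    · rw [Finset.card_insert_of_notMem hni, hF1, Finset.card_erase_of_mem hp, hcard]
      have : 1 ≤ k := hcard ▸ Finset.card_pos.mpr ⟨(p, i), hp⟩
      omega
    · -- root j
      intro u hu
      rcases Finset.mem_insert.mp hu with he | hmem
      · simp only [Prod.mk.injEq] at he
        exact hij he.2.symm
      · exact hrootj u (hF1sub hmem)
    · -- Relation.ReflTransGen (arcRel F2) j p
      have hjp : Relation.ReflTransGen (arcRel F) j p := hpz ▸ hjz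
      rcases rch_erase_cases (a := (p, i)) hjp with h | h
      · exact rch_mono (Finset.subset_insert _ _) h
      · exact absurd (rch_mono hF1sub h) (not_rch_of_arc hsp.2 hp)
    · -- ¬ Relation.ReflTransGen (arcRel F2) j i
      intro h
      obtain ⟨z', hjz', hz'⟩ := rch_tail h (Ne.symm hij)
      have hz'm : z' = m := by
        rcases Finset.mem_insert.mp hz' with he | hmem
        · exact (Prod.mk.injEq .. ▸ he).1
        · exact absurd hmem (hrooti1 z')
      subst hz'm
      rcases rch_insert_cases hjz' with h' | ⟨h', _⟩
      · exact hnrchm (rch_mono hF1sub h')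
      · exact hnrchm (rch_mono hF1sub h')
    · -- ¬ root i
      push_neg
      exact ⟨m, Finset.mem_insert_self _ _⟩
  · -- Y → X membership
    rintro ⟨m, F⟩ hx
    simp only [Finset.mem_sigma, Finset.mem_filter, Finset.mem_univ, mem_forestsK,
      true_and] at hx ⊢
    obtain ⟨⟨hmi, hmw⟩, ⟨hsp, hcard⟩, hrootj, hrchm, hnrchi, hnrooti⟩ := hx
    push_neg at hnrooti
    obtain ⟨u, hu⟩ := hnrooti
    have hp : (par F i, i) ∈ F := par_mem ⟨u, hu⟩
    set p := par F i with hpdef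
    set F1 := F.erase (p, i) with hF1
    have hF1sub : F1 ⊆ F := Finset.erase_subset _ _
    have hF1sp : IsSpForest ε F1 := spForest_subset hF1sub hsp
    have hrooti1 : ∀ u, (u, i) ∉ F1 := by
      intro u' hu'
      have := Finset.mem_erase.mp hu'
      exact this.1 (hsp.2.2 i u' p this.2 hp ▸ rfl)
    have hnrim : ¬ Relation.ReflTransGen (arcRel F1) i m := by
      intro h
      have him : Relation.ReflTransGen (arcRel F) i m := rch_mono hF1sub h
      rcases rch_comparable hsp.2 hrchm him with h' | h'
      · exact hnrchi h'
      · exact hij (eq_of_root_rch hrootj h')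
    have hforest2 : IsDivForest (insert (m, i) F1) :=
      divForest_insert hF1sp.2 hrooti1 hnrim hmi
    have hni : (m, i) ∉ F1 := hrooti1 m
    have hrchm1 : Relation.ReflTransGen (arcRel F1) j m := by
      rcases rch_erase_cases (a := (p, i)) hrchm with h | h
      · exact h
      · exact absurd h hnrim
    refine ⟨⟨fun h => no_loop hsp.2 (h ▸ hp), hsp.1 _ hp⟩,
      ⟨⟨?_, hforest2⟩, ?_⟩, ?_, ?_, ?_⟩
    · intro q hq
      rcases Finset.mem_insert.mp hq with he | hmem
      · rw [he]; exact hmw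
      · exact hsp.1 q (hF1sub hmem)
    · rw [Finset.card_insert_of_notMem hni, hF1, Finset.card_erase_of_mem hp, hcard]
      have : 1 ≤ k := hcard ▸ Finset.card_pos.mpr ⟨(p, i), hp⟩
      omega
    · intro u' hu'
      rcases Finset.mem_insert.mp hu' with he | hmem
      · simp only [Prod.mk.injEq] at he
        exact hij he.2.symm
      · exact hrootj u' (hF1sub hmem)
    · -- Relation.ReflTransGen (arcRel F2) j i
      exact (rch_mono (Finset.subset_insert _ _) hrchm1).tail (Finset.mem_insert_self _ _)
    · -- ¬ Relation.ReflTransGen (arcRel F2) j p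
      intro h
      rcases rch_insert_cases h with h' | ⟨_, h'⟩
      · exact hnrchi ((rch_mono hF1sub h').tail hp)
      · exact not_rch_of_arc hsp.2 hp (rch_mono hF1sub h')
  · -- left inverse
    rintro ⟨m, F⟩ hx
    simp only [Finset.mem_sigma, Finset.mem_filter, Finset.mem_univ, mem_forestsK,
      true_and] at hx
    obtain ⟨⟨hmi, hmw⟩, ⟨hsp, hcard⟩, hrootj, hrchi, hnrchm⟩ := hx
    obtain ⟨z, hjz, hz⟩ := rch_tail hrchi (Ne.symm hij)
    have hp : (par F i, i) ∈ F := par_mem ⟨z, hz⟩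
    set p := par F i with hpdef
    set F1 := F.erase (p, i) with hF1
    have hrooti1 : ∀ u, (u, i) ∉ F1 := by
      intro u' hu'
      have := Finset.mem_erase.mp hu'
      exact this.1 (hsp.2.2 i u' p this.2 hp ▸ rfl)
    have hnrim : ¬ Relation.ReflTransGen (arcRel F1) i m := by
      intro h
      exact hnrchm (hrchi.trans (rch_mono (Finset.erase_subset _ _) h))
    have hforest2 : IsDivForest (insert (m, i) F1) :=
      divForest_insert (spForest_subset (Finset.erase_subset _ _) hsp).2 hrooti1 hnrim hmi
    have hpar2 : par (insert (m, i) F1) i = m := par_eq hforest2 (Finset.mem_insert_self _ _)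
    simp only [hpar2]
    rw [Finset.erase_insert (hrooti1 m), Finset.insert_erase hp]
  · -- right inverse
    rintro ⟨m, F⟩ hx
    simp only [Finset.mem_sigma, Finset.mem_filter, Finset.mem_univ, mem_forestsK,
      true_and] at hx
    obtain ⟨⟨hmi, hmw⟩, ⟨hsp, hcard⟩, hrootj, hrchm, hnrchi, hnrooti⟩ := hx
    push_neg at hnrooti
    obtain ⟨u, hu⟩ := hnrooti
    have hp : (par F i, i) ∈ F := par_mem ⟨u, hu⟩
    set p := par F i with hpdef
    set F1 := F.erase (p, i) with hF1
    have hrooti1 : ∀ u, (u, i) ∉ F1 := by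
      intro u' hu'
      have := Finset.mem_erase.mp hu'
      exact this.1 (hsp.2.2 i u' p this.2 hp ▸ rfl)
    have hnrim : ¬ Relation.ReflTransGen (arcRel F1) i m := by
      intro h
      have him : Relation.ReflTransGen (arcRel F) i m := rch_mono (Finset.erase_subset _ _) h
      rcases rch_comparable hsp.2 hrchm him with h' | h'
      · exact hnrchi h'
      · exact hij (eq_of_root_rch hrootj h')
    have hforest2 : IsDivForest (insert (m, i) F1) :=
      divForest_insert (spForest_subset (Finset.erase_subset _ _) hsp).2 hrooti1 hnrim hmi
    have hpar2 : par (insert (m, i) F1) i = m := par_eq hforest2 (Finset.mem_insert_self _ _)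
    simp only [hpar2]
    rw [Finset.erase_insert (hrooti1 m), Finset.insert_erase hp]
  · -- weights
    rintro ⟨m, F⟩ hx
    simp only [Finset.mem_sigma, Finset.mem_filter, Finset.mem_univ, mem_forestsK,
      true_and] at hx
    obtain ⟨⟨hmi, hmw⟩, ⟨hsp, hcard⟩, hrootj, hrchi, hnrchm⟩ := hx
    obtain ⟨z, hjz, hz⟩ := rch_tail hrchi (Ne.symm hij)
    have hp : (par F i, i) ∈ F := par_mem ⟨z, hz⟩
    have hni : (par F i, i) ∉ F.erase (par F i, i) := Finset.notMem_erase _ _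
    have h1 : (m, i) ∉ F.erase (par F i, i) := by
      intro h
      have := Finset.mem_erase.mp h
      exact this.1 (hsp.2.2 i m (par F i) this.2 hp ▸ rfl)
    show ε m i * fweight ε F = ε (par F i) i * fweight ε (insert (m, i) (F.erase (par F i, i)))
    rw [fweight_insert h1, ← fweight_erase_mul hp]
    ring


end Aux5
section Aux6

variable {ε : Fin n → Fin n → ℝ}

lemma sum_drop_zero (hnn : ∀ a b, 0 ≤ ε a b) (i : Fin n) (g : Fin n → ℝ) :
    ∑ m ∈ Finset.univ.filter (· ≠ i), ε m i * g m
      = ∑ m ∈ Finset.univ.filter (fun m => m ≠ i ∧ 0 < ε m i), ε m i * g m := by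
  refine (Finset.sum_subset ?_ ?_).symm
  · intro x hx
    simp only [Finset.mem_filter, Finset.mem_univ, true_and] at *
    exact hx.1
  · intro x hx hx'
    simp only [Finset.mem_filter, Finset.mem_univ, true_and, not_and] at hx hx'
    have : ε x i = 0 := le_antisymm (not_lt.mp (hx' hx)) (hnn x i)
    rw [this, zero_mul]

set_option maxHeartbeats 2000000 in
lemma key (hnn : ∀ a b, 0 ≤ ε a b) (k : ℕ) (j i : Fin n) :
    swt ε (forestsKji ε (k+1) j i)
      + ∑ m ∈ Finset.univ.filter (· ≠ i), ε m i * swt ε (forestsKji ε k j i)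
    = (if i = j then swt ε (forestsK ε (k+1)) else 0)
      + ∑ m ∈ Finset.univ.filter (· ≠ i), ε m i * swt ε (forestsKji ε k j m) := by
  rw [sum_drop_zero hnn, sum_drop_zero hnn]
  by_cases hij : i = j
  · subst hij
    rw [if_pos rfl]
    have e0 : forestsKji ε (k+1) i i
        = (forestsK ε (k+1)).filter (fun F => ∀ u, (u, i) ∉ F) := by
      unfold forestsKji
      apply Finset.filter_congr
      intro F _
      exact ⟨fun h => h.1, fun h => ⟨h, Relation.ReflTransGen.refl⟩⟩
    have e1 : swt ε (forestsK ε (k+1))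
        = swt ε (forestsKji ε (k+1) i i)
          + ∑ F ∈ (forestsK ε (k+1)).filter (fun F => ¬ ∀ u, (u, i) ∉ F), fweight ε F := by
      rw [e0, swt, swt, Finset.sum_filter_add_sum_filter_not]
    have e2 := (bij_root (ε := ε) k i).trans
      (Finset.sum_sigma' (Finset.univ.filter (fun m => m ≠ i ∧ 0 < ε m i))
        (fun m => (forestsK ε k).filter
          (fun F => (∀ u, (u, i) ∉ F) ∧ ¬ Relation.ReflTransGen (arcRel F) i m))
        (fun a b => ε a i * fweight ε b)).symm
    rw [e1, e2, add_assoc]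
    congr 1
    rw [← Finset.sum_add_distrib]
    apply Finset.sum_congr rfl
    intro m hm
    unfold forestsKji
    simp only [swt, Finset.mul_sum, Finset.sum_filter]
    rw [← Finset.sum_add_distrib]
    apply Finset.sum_congr rfl
    intro F hF
    have hrefl : Relation.ReflTransGen (arcRel F) i i := Relation.ReflTransGen.refl
    by_cases hp : ∀ u, (u, i) ∉ F <;> by_cases hm' : Relation.ReflTransGen (arcRel F) i m <;>
      simp [hp, hm', hrefl]
  · rw [if_neg hij, zero_add]
    have hij' : i ≠ j := hij
    have e_attach := (bij_attach (ε := ε) k hij').trans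
      (Finset.sum_sigma' (Finset.univ.filter (fun m => m ≠ i ∧ 0 < ε m i))
        (fun m => (forestsK ε k).filter
          (fun F => (∀ u, (u, j) ∉ F) ∧ Relation.ReflTransGen (arcRel F) j m
            ∧ ∀ u, (u, i) ∉ F))
        (fun a b => ε a i * fweight ε b)).symm
    have e_swap := ((Finset.sum_sigma' (Finset.univ.filter (fun m => m ≠ i ∧ 0 < ε m i))
        (fun m => (forestsK ε k).filter
          (fun F => (∀ u, (u, j) ∉ F) ∧ Relation.ReflTransGen (arcRel F) j i
            ∧ ¬ Relation.ReflTransGen (arcRel F) j m))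
        (fun a b => ε a i * fweight ε b)).trans ((bij_swap (ε := ε) k hij').trans
      (Finset.sum_sigma' (Finset.univ.filter (fun m => m ≠ i ∧ 0 < ε m i))
        (fun m => (forestsK ε k).filter
          (fun F => (∀ u, (u, j) ∉ F) ∧ Relation.ReflTransGen (arcRel F) j m
            ∧ ¬ Relation.ReflTransGen (arcRel F) j i ∧ ¬ ∀ u, (u, i) ∉ F))
        (fun a b => ε a i * fweight ε b)).symm))
    rw [show swt ε (forestsKji ε (k+1) j i) = ∑ F ∈ forestsKji ε (k+1) j i, fweight ε F
      from rfl, e_attach]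
    have hpoint : ∀ m ∈ Finset.univ.filter (fun m => m ≠ i ∧ 0 < ε m i),
        ((∑ F ∈ (forestsK ε k).filter
            (fun F => (∀ u, (u, j) ∉ F) ∧ Relation.ReflTransGen (arcRel F) j m
              ∧ ∀ u, (u, i) ∉ F), ε m i * fweight ε F)
          + ε m i * swt ε (forestsKji ε k j i))
        + (∑ F ∈ (forestsK ε k).filter
            (fun F => (∀ u, (u, j) ∉ F) ∧ Relation.ReflTransGen (arcRel F) j m
              ∧ ¬ Relation.ReflTransGen (arcRel F) j i ∧ ¬ ∀ u, (u, i) ∉ F),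
            ε m i * fweight ε F)
        = (ε m i * swt ε (forestsKji ε k j m))
          + (∑ F ∈ (forestsK ε k).filter
              (fun F => (∀ u, (u, j) ∉ F) ∧ Relation.ReflTransGen (arcRel F) j i
                ∧ ¬ Relation.ReflTransGen (arcRel F) j m), ε m i * fweight ε F) := by
      intro m hm
      unfold forestsKji
      simp only [swt, Finset.mul_sum, Finset.sum_filter]
      rw [← Finset.sum_add_distrib, ← Finset.sum_add_distrib, ← Finset.sum_add_distrib]
      apply Finset.sum_congr rfl
      intro F hF
      have hfact : (∀ u, (u, i) ∉ F) → Relation.ReflTransGen (arcRel F) j i → False := by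
        intro hroot hr
        exact hij' (eq_of_root_rch hroot hr).symm
      by_cases hr : ∀ u, (u, j) ∉ F <;>
        by_cases ha : Relation.ReflTransGen (arcRel F) j i <;>
        by_cases hb : Relation.ReflTransGen (arcRel F) j m <;>
        by_cases hc : ∀ u, (u, i) ∉ F <;>
        first
          | exact (hfact hc ha).elim
          | (simp [hr, ha, hb, hc]; try ring1)
    have hsplit := Finset.sum_congr rfl hpoint
    rw [Finset.sum_add_distrib, Finset.sum_add_distrib, Finset.sum_add_distrib] at hsplit
    linarith [hsplit, e_swap]

end Aux6
section Aux7

variable {ε : Fin n → Fin n → ℝ}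

lemma swt_forestsKji_top (j i : Fin n) : swt ε (forestsKji ε (maxArcs ε + 1) j i) = 0 := by
  rw [forestsKji, forestsK_top, Finset.filter_empty, swt, Finset.sum_empty]

lemma swt_forestsK_top : swt ε (forestsK ε (maxArcs ε + 1)) = 0 := by
  rw [forestsK_top, swt, Finset.sum_empty]

lemma key_sum (hnn : ∀ a b, 0 ≤ ε a b) (τ : ℝ) (j i : Fin n) :
    (∑ k ∈ Finset.range (maxArcs ε + 1), τ ^ k * swt ε (forestsKji ε k j i))
      + τ * ((∑ m ∈ Finset.univ.filter (· ≠ i), ε m i)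
          * ∑ k ∈ Finset.range (maxArcs ε + 1), τ ^ k * swt ε (forestsKji ε k j i))
      - τ * (∑ m ∈ Finset.univ.filter (· ≠ i), ε m i
          * ∑ k ∈ Finset.range (maxArcs ε + 1), τ ^ k * swt ε (forestsKji ε k j m))
    = (if i = j then 1 else 0)
        * ∑ k ∈ Finset.range (maxArcs ε + 1), τ ^ k * swt ε (forestsK ε k) := by
  set K := maxArcs ε with hK
  set f : ℕ → ℝ := fun k => swt ε (forestsKji ε k j i) with hf
  set S : ℕ → ℝ := fun k => swt ε (forestsK ε k) with hS
  -- push the m-sums inside the k-sums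
  have e1 : (∑ m ∈ Finset.univ.filter (· ≠ i), ε m i)
      * ∑ k ∈ Finset.range (K + 1), τ ^ k * f k
      = ∑ k ∈ Finset.range (K + 1), τ ^ k
          * ∑ m ∈ Finset.univ.filter (· ≠ i), ε m i * f k := by
    rw [Finset.mul_sum]
    apply Finset.sum_congr rfl
    intro k _
    rw [Finset.sum_mul, Finset.mul_sum]
    apply Finset.sum_congr rfl
    intro m _
    ring
  have e2 : (∑ m ∈ Finset.univ.filter (· ≠ i), ε m i
        * ∑ k ∈ Finset.range (K + 1), τ ^ k * swt ε (forestsKji ε k j m))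
      = ∑ k ∈ Finset.range (K + 1), τ ^ k
          * ∑ m ∈ Finset.univ.filter (· ≠ i), ε m i * swt ε (forestsKji ε k j m) := by
    rw [Finset.sum_congr rfl (fun m _ => Finset.mul_sum (Finset.range (K+1))
      (fun k => τ ^ k * swt ε (forestsKji ε k j m)) (ε m i)), Finset.sum_comm]
    apply Finset.sum_congr rfl
    intro k _
    rw [Finset.mul_sum]
    apply Finset.sum_congr rfl
    intro m _
    ring
  have e3 : τ * ∑ k ∈ Finset.range (K + 1),
        (τ ^ k * ∑ m ∈ Finset.univ.filter (· ≠ i), ε m i * f k)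
      = ∑ k ∈ Finset.range (K + 1),
          τ * (τ ^ k * ∑ m ∈ Finset.univ.filter (· ≠ i), ε m i * f k) :=
    Finset.mul_sum _ _ _
  have e4 : τ * ∑ k ∈ Finset.range (K + 1),
        (τ ^ k * ∑ m ∈ Finset.univ.filter (· ≠ i), ε m i * swt ε (forestsKji ε k j m))
      = ∑ k ∈ Finset.range (K + 1),
          τ * (τ ^ k * ∑ m ∈ Finset.univ.filter (· ≠ i), ε m i * swt ε (forestsKji ε k j m)) :=
    Finset.mul_sum _ _ _
  rw [e1, e2, e3, e4]
  -- now everything is k-sums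
  have hcomb : ∀ k ∈ Finset.range (K + 1),
      τ * (τ ^ k * ∑ m ∈ Finset.univ.filter (· ≠ i), ε m i * f k)
        - τ * (τ ^ k * ∑ m ∈ Finset.univ.filter (· ≠ i), ε m i * swt ε (forestsKji ε k j m))
      = τ ^ (k+1) * (if i = j then S (k+1) else 0) - τ ^ (k+1) * f (k+1) := by
    intro k _
    have hk := key hnn k j i
    have : (∑ m ∈ Finset.univ.filter (· ≠ i), ε m i * f k)
        - (∑ m ∈ Finset.univ.filter (· ≠ i), ε m i * swt ε (forestsKji ε k j m))
        = (if i = j then S (k+1) else 0) - f (k+1) := by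
      have hfk : (∑ m ∈ Finset.univ.filter (· ≠ i), ε m i * f k)
          = ∑ m ∈ Finset.univ.filter (· ≠ i), ε m i * swt ε (forestsKji ε k j i) := rfl
      rw [hfk]
      linarith [hk]
    calc τ * (τ ^ k * ∑ m ∈ Finset.univ.filter (· ≠ i), ε m i * f k)
          - τ * (τ ^ k * ∑ m ∈ Finset.univ.filter (· ≠ i), ε m i * swt ε (forestsKji ε k j m))
        = τ ^ (k+1) * ((∑ m ∈ Finset.univ.filter (· ≠ i), ε m i * f k)
            - ∑ m ∈ Finset.univ.filter (· ≠ i), ε m i * swt ε (forestsKji ε k j m)) := by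
          rw [pow_succ]; ring
      _ = τ ^ (k+1) * ((if i = j then S (k+1) else 0) - f (k+1)) := by rw [this]
      _ = τ ^ (k+1) * (if i = j then S (k+1) else 0) - τ ^ (k+1) * f (k+1) := by ring
  -- telescoping and conclusion
  have htel : ∑ k ∈ Finset.range (K + 1), τ ^ (k+1) * f (k+1)
      = (∑ k ∈ Finset.range (K + 1), τ ^ k * f k) - f 0 := by
    have := Finset.sum_range_succ' (fun k => τ ^ k * f k) K
    have h2 := Finset.sum_range_succ (fun k => τ ^ (k+1) * f (k+1)) K
    have hfK : f (K + 1) = 0 := swt_forestsKji_top j i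
    rw [h2, hfK]
    simp only [pow_zero, one_mul] at this
    rw [this]
    ring
  have hdelta : ∑ k ∈ Finset.range (K + 1), τ ^ (k+1) * (if i = j then S (k+1) else 0)
      = (if i = j then 1 else 0) * ((∑ k ∈ Finset.range (K + 1), τ ^ k * S k) - 1) := by
    by_cases hij : i = j
    · simp only [hij, if_true, one_mul]
      have := Finset.sum_range_succ' (fun k => τ ^ k * S k) K
      have h2 := Finset.sum_range_succ (fun k => τ ^ (k+1) * S (k+1)) K
      have hSK : S (K + 1) = 0 := swt_forestsK_top
      have hS0 : S 0 = 1 := swt_forestsK_zero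
      rw [h2, hSK]
      simp only [pow_zero, one_mul, hS0] at this
      rw [this]
      ring
    · simp [hij]
  have hsum := Finset.sum_congr rfl hcomb
  rw [Finset.sum_sub_distrib, Finset.sum_sub_distrib, htel, hdelta] at hsum
  have hf0 : f 0 = (if i = j then 1 else 0) := swt_forestsKji_zero
  by_cases hij : i = j
  · rw [if_pos hij] at hsum hf0 ⊢
    rw [one_mul] at hsum ⊢
    linarith [hsum]
  · rw [if_neg hij] at hsum hf0 ⊢
    rw [zero_mul] at hsum ⊢
    linarith [hsum]

end Aux7
set_option maxHeartbeats 1000000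

/-- Parametric matrix-forest theorem for digraphs. -/
theorem stmt12 (ε : Fin n → Fin n → ℝ) (hnonneg : ∀ i j, 0 ≤ ε i j)
    (hloop : ∀ i, ε i i = 0) (τ : ℝ) (hτ : 0 < τ) :
    (1 + τ • Kirchhoff ε).det ≠ 0 ∧
      ∀ i j, (1 + τ • Kirchhoff ε)⁻¹ i j =
        (∑ k ∈ Finset.range (maxArcs ε + 1), τ ^ k * swt ε (forestsKji ε k j i)) /
          (∑ k ∈ Finset.range (maxArcs ε + 1), τ ^ k * swt ε (forestsK ε k)) := by
  set K := maxArcs ε with hK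
  set c : ℝ := ∑ k ∈ Finset.range (K + 1), τ ^ k * swt ε (forestsK ε k) with hc
  have hcpos : 0 < c := by
    rw [hc]
    apply Finset.sum_pos'
    · intro k _
      exact mul_nonneg (pow_nonneg hτ.le k) (swt_nonneg (fun F hF => (mem_forestsK.mp hF).1))
    · exact ⟨0, Finset.mem_range.mpr (Nat.succ_pos K),
        by simp [swt_forestsK_zero]⟩
  have hc0 : c ≠ 0 := ne_of_gt hcpos
  set B : Matrix (Fin n) (Fin n) ℝ := Matrix.of (fun i j =>
    (∑ k ∈ Finset.range (K + 1), τ ^ k * swt ε (forestsKji ε k j i)) / c) with hB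
  have hmul : (1 + τ • Kirchhoff ε) * B = 1 := by
    ext i j
    rw [Matrix.mul_apply, Matrix.one_apply]
    have key' := key_sum (ε := ε) hnonneg τ j i
    rw [← hK, ← hc] at key'
    rw [← Finset.add_sum_erase _ _ (Finset.mem_univ i)]
    have hii : (1 + τ • Kirchhoff ε) i i * B i j
        = (1 + τ * ∑ m ∈ Finset.univ.filter (· ≠ i), ε m i) *
          ((∑ k ∈ Finset.range (K + 1), τ ^ k * swt ε (forestsKji ε k j i)) / c) := by
      simp only [hB, Matrix.add_apply, Matrix.one_apply_eq, Matrix.smul_apply, Kirchhoff,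
        Matrix.of_apply, if_pos rfl, smul_eq_mul, if_true]
    have hoff : ∀ m ∈ Finset.univ.erase i, (1 + τ • Kirchhoff ε) i m * B m j
        = -(τ * ε m i) *
          ((∑ k ∈ Finset.range (K + 1), τ ^ k * swt ε (forestsKji ε k j m)) / c) := by
      intro m hm
      have hne : i ≠ m := fun h => (Finset.mem_erase.mp hm).1 h.symm
      simp only [hB, Matrix.add_apply, Matrix.one_apply_ne hne, Matrix.smul_apply, Kirchhoff,
        Matrix.of_apply, if_neg hne, smul_eq_mul]
      ring
    rw [hii, Finset.sum_congr rfl hoff, ← Finset.filter_ne' Finset.univ i]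
    have hpull : ∑ m ∈ Finset.univ.filter (· ≠ i), -(τ * ε m i) *
          ((∑ k ∈ Finset.range (K + 1), τ ^ k * swt ε (forestsKji ε k j m)) / c)
        = (∑ m ∈ Finset.univ.filter (· ≠ i), -(τ * (ε m i
            * ∑ k ∈ Finset.range (K + 1), τ ^ k * swt ε (forestsKji ε k j m)))) / c := by
      rw [Finset.sum_div]
      apply Finset.sum_congr rfl
      intro m _
      ring
    rw [hpull, Finset.sum_neg_distrib, mul_div_assoc', ← add_div, div_eq_iff hc0]
    have hτsum : ∑ m ∈ Finset.univ.filter (· ≠ i), τ * (ε m i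
          * ∑ k ∈ Finset.range (K + 1), τ ^ k * swt ε (forestsKji ε k j m))
        = τ * ∑ m ∈ Finset.univ.filter (· ≠ i), ε m i
            * ∑ k ∈ Finset.range (K + 1), τ ^ k * swt ε (forestsKji ε k j m) := by
      rw [Finset.mul_sum]
    rw [hτsum]
    linear_combination key'
  refine ⟨Matrix.det_ne_zero_of_right_inverse hmul, ?_⟩
  intro i j
  rw [Matrix.inv_eq_right_inv hmul]
  simp only [hB, Matrix.of_apply]
end

section
/- Let q_{ij} = ε(F_{n-v}^{j→i}) be the entries of the matrix of maximum out forests of a weighted digraph G. Then q_{ij} ≠ 0 if and only if j belongs to some undominated knot of G and i is reachable from j in G. -/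
open scoped Classical
open Finset

variable {n : ℕ}

/-- `K` is an undominated knot of the weighted digraph with weights `ε`. -/
def IsUndomKnot (ε : Fin n → Fin n → ℝ) (K : Finset (Fin n)) : Prop :=
  K.Nonempty ∧
  (∀ i ∈ K, ∀ j ∈ K, Relation.ReflTransGen (fun a b => 0 < ε a b) i j) ∧
  ∀ i j : Fin n, 0 < ε i j → j ∈ K → i ∈ K


lemma descend (r : Fin n → Fin n → Prop) (x : Fin n) :
    ∃ g, Relation.ReflTransGen r g x ∧ ∀ u, r u g → Relation.ReflTransGen r g u := by
  suffices h : ∀ (m : ℕ) (x : Fin n),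
      (univ.filter (fun u => Relation.ReflTransGen r u x)).card ≤ m →
      ∃ g, Relation.ReflTransGen r g x ∧ ∀ u, r u g → Relation.ReflTransGen r g u from
    h _ x le_rfl
  intro m
  induction m with
  | zero =>
    intro x hx
    exfalso
    have hmem : x ∈ univ.filter (fun u => Relation.ReflTransGen r u x) := Finset.mem_filter.2 ⟨Finset.mem_univ x, .refl⟩
    have := Finset.card_pos.mpr ⟨x, hmem⟩
    omega
  | succ m ih =>
    intro x hx
    by_cases hgood : ∀ u, r u x → Relation.ReflTransGen r x u
    · exact ⟨x, .refl, hgood⟩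
    · push_neg at hgood
      obtain ⟨u, hu, hnr⟩ := hgood
      have hsub : univ.filter (fun z => Relation.ReflTransGen r z u) ⊂
          univ.filter (fun z => Relation.ReflTransGen r z x) := by
        constructor
        · intro z hz
          simp only [Finset.mem_filter, Finset.mem_univ, true_and] at hz ⊢
          exact hz.tail hu
        · intro hcon
          have hx2 : x ∈ univ.filter (fun z => Relation.ReflTransGen r z u) :=
            hcon (Finset.mem_filter.2 ⟨Finset.mem_univ x, .refl⟩)
          simp only [Finset.mem_filter, Finset.mem_univ, true_and] at hx2
          exact hnr hx2
      have hcard := Finset.card_lt_card hsub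
      obtain ⟨g, hg1, hg2⟩ := ih u (by omega)
      exact ⟨g, hg1.tail hu, hg2⟩

lemma rtg_flatten {r : Fin n → Fin n → Prop} {a b : Fin n}
    (h : Relation.ReflTransGen (Relation.ReflTransGen r) a b) :
    Relation.ReflTransGen r a b := by
  induction h with
  | refl => exact .refl
  | tail _ h2 ih => exact ih.trans h2

lemma root_above {F : Finset (Fin n × Fin n)}
    (hacyc : ∀ v, ¬ Relation.TransGen (arcRel F) v v) (x : Fin n) :
    ∃ r, (∀ z, (z, r) ∉ F) ∧ Relation.ReflTransGen (arcRel F) r x := by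
  obtain ⟨g, h1, h2⟩ := descend (arcRel F) x
  refine ⟨g, fun z hz => ?_, h1⟩
  exact hacyc g (Relation.TransGen.tail' (h2 z hz) hz)

lemma boundary {s : Fin n → Fin n → Prop} {C : Finset (Fin n)} {r x : Fin n}
    (hr : r ∈ C) (h : Relation.ReflTransGen s r x) :
    x ∉ C → ∃ a b, s a b ∧ a ∈ C ∧ b ∉ C := by
  induction h with
  | refl => intro hx; exact absurd hr hx
  | @tail b c h1 h2 ih =>
    intro hx
    by_cases hb : b ∈ C
    · exact ⟨b, c, h2, hb, hx⟩
    · exact ih hb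

lemma rtg_insert {F : Finset (Fin n × Fin n)} {a b : Fin n} {C : Finset (Fin n)}
    (hb : b ∉ C) (htails : ∀ p ∈ F, p.1 ∈ C) (ha : a ∈ C) :
    ∀ x y, Relation.ReflTransGen (arcRel (insert (a, b) F)) x y →
      Relation.ReflTransGen (arcRel F) x y ∨
      (y = b ∧ Relation.ReflTransGen (arcRel F) x a) := by
  intro x y h
  induction h with
  | refl => exact Or.inl .refl
  | @tail c d h1 h2 ih =>
    have h2' : (c, d) ∈ insert (a, b) F := h2
    rcases Finset.mem_insert.1 h2' with he | hm
    · have hc : c = a := congrArg Prod.fst he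
      have hd : d = b := congrArg Prod.snd he
      subst hc hd
      rcases ih with h | ⟨rfl, h⟩
      · exact Or.inr ⟨rfl, h⟩
      · exact absurd ha hb
    · rcases ih with h | ⟨rfl, h⟩
      · exact Or.inl (h.tail hm)
      · exact absurd (htails _ hm) (by simpa using hb)

lemma acyclic_insert {F : Finset (Fin n × Fin n)} {a b : Fin n} {C : Finset (Fin n)}
    (hacyc : ∀ v, ¬ Relation.TransGen (arcRel F) v v)
    (hb : b ∉ C) (htails : ∀ p ∈ F, p.1 ∈ C) (ha : a ∈ C) :
    ∀ v, ¬ Relation.TransGen (arcRel (insert (a, b) F)) v v := by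
  intro v hv
  obtain ⟨w, hw1, hw2⟩ := Relation.TransGen.tail'_iff.1 hv
  have hw2' : (w, v) ∈ insert (a, b) F := hw2
  rcases Finset.mem_insert.1 hw2' with he | hm
  · have hwa : w = a := congrArg Prod.fst he
    have hvb : v = b := congrArg Prod.snd he
    subst hwa hvb
    rcases rtg_insert hb htails ha _ _ hw1 with h | ⟨_, h⟩
    · rcases h.cases_head with rfl | ⟨c, hc1, _⟩
      · exact hb ha
      · exact hb (htails _ hc1)
    · rcases h.cases_head with rfl | ⟨c, hc1, _⟩
      · exact hb ha
      · exact hb (htails _ hc1)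
  · rcases rtg_insert hb htails ha _ _ hw1 with h | ⟨rfl, h⟩
    · exact hacyc v (Relation.TransGen.tail' h hm)
    · exact hb (htails _ hm)

lemma forest_card {F : Finset (Fin n × Fin n)} {S : Finset (Fin n)}
    (hfun : ∀ w z₁ z₂ : Fin n, (z₁, w) ∈ F → (z₂, w) ∈ F → z₁ = z₂)
    (hS : ∀ x, x ∈ S ↔ ∃ z, (z, x) ∈ F) : F.card = S.card := by
  have himg : F.image Prod.snd = S := by
    ext x
    simp only [Finset.mem_image, hS]
    constructor
    · rintro ⟨p, hp, rfl⟩; exact ⟨p.1, hp⟩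
    · rintro ⟨z, hz⟩; exact ⟨(z, x), hz, rfl⟩
  have hinj : Set.InjOn Prod.snd (↑F : Set (Fin n × Fin n)) := by
    rintro ⟨p1, p2⟩ hp ⟨q1, q2⟩ hq h
    simp only at h
    subst h
    have := hfun p2 p1 q1 hp hq
    simp [this]
  rw [← himg, Finset.card_image_of_injOn hinj]

lemma grow (ε : Fin n → Fin n → ℝ) (T R₀ : Finset (Fin n)) :
    ∀ (m : ℕ) (C : Finset (Fin n)) (F : Finset (Fin n × Fin n)),
    (T \ C).card ≤ m →
    R₀ ⊆ C → C ⊆ T →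
    (∀ p ∈ F, 0 < ε p.1 p.2) →
    (∀ w z₁ z₂ : Fin n, (z₁, w) ∈ F → (z₂, w) ∈ F → z₁ = z₂) →
    (∀ v, ¬ Relation.TransGen (arcRel F) v v) →
    (∀ p ∈ F, p.1 ∈ C ∧ p.2 ∈ C) →
    (∀ x : Fin n, (x ∈ C ∧ x ∉ R₀) ↔ ∃ z, (z, x) ∈ F) →
    (∀ x ∈ C, ∃ r ∈ R₀, Relation.ReflTransGen (arcRel F) r x) →
    (∀ x ∈ T, ∃ r ∈ C, Relation.ReflTransGen (fun a b => 0 < ε a b ∧ a ∈ T ∧ b ∈ T) r x) →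
    ∃ F' : Finset (Fin n × Fin n),
      F ⊆ F' ∧
      (∀ p ∈ F', 0 < ε p.1 p.2) ∧
      (∀ w z₁ z₂ : Fin n, (z₁, w) ∈ F' → (z₂, w) ∈ F' → z₁ = z₂) ∧
      (∀ v, ¬ Relation.TransGen (arcRel F') v v) ∧
      (∀ p ∈ F', p.1 ∈ T ∧ p.2 ∈ T) ∧
      (∀ x : Fin n, (x ∈ T ∧ x ∉ R₀) ↔ ∃ z, (z, x) ∈ F') ∧
      (∀ x ∈ T, ∃ r ∈ R₀, Relation.ReflTransGen (arcRel F') r x) := by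
  intro m
  induction m with
  | zero =>
    intro C F hm _ hCT h1 h2 h3 h4 h5 h6 _
    have hTC : T \ C = ∅ := Finset.card_eq_zero.1 (Nat.le_zero.1 hm)
    have hCeq : C = T := Finset.Subset.antisymm hCT (fun x hx => by
      by_contra hxc
      exact (Finset.notMem_empty x) (hTC ▸ Finset.mem_sdiff.2 ⟨hx, hxc⟩))
    subst hCeq
    exact ⟨F, Finset.Subset.refl F, h1, h2, h3, h4, h5, h6⟩
  | succ m ih =>
    intro C F hm hRC hCT h1 h2 h3 h4 h5 h6 hH
    by_cases hTC : T \ C = ∅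
    · have hCeq : C = T := Finset.Subset.antisymm hCT (fun x hx => by
        by_contra hxc
        exact (Finset.notMem_empty x) (hTC ▸ Finset.mem_sdiff.2 ⟨hx, hxc⟩))
      subst hCeq
      exact ⟨F, Finset.Subset.refl F, h1, h2, h3, h4, h5, h6⟩
    · obtain ⟨x, hx⟩ := Finset.nonempty_iff_ne_empty.2 hTC
      obtain ⟨hxT, hxC⟩ := Finset.mem_sdiff.1 hx
      obtain ⟨r, hrC, hrx⟩ := hH x hxT
      obtain ⟨a, b, ⟨hab, haT, hbT⟩, haC, hbC⟩ := boundary hrC hrx hxC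
      have htails : ∀ p ∈ F, p.1 ∈ C := fun p hp => (h4 p hp).1
      -- new forest
      have hres := ih (insert b C) (insert (a, b) F) ?_ (hRC.trans (Finset.subset_insert b C))
        (Finset.insert_subset hbT (hCT)) ?_ ?_ ?_ ?_ ?_ ?_ ?_
      · obtain ⟨F', hs, g1, g2, g3, g4, g5, g6⟩ := hres
        exact ⟨F', (Finset.subset_insert (a, b) F).trans hs, g1, g2, g3, g4, g5, g6⟩
      · -- measure
        have : T \ insert b C = (T \ C).erase b := by
          ext y
          simp only [Finset.mem_sdiff, Finset.mem_insert, Finset.mem_erase]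
          tauto
        have hb' : b ∈ T \ C := Finset.mem_sdiff.2 ⟨hbT, hbC⟩
        have hpos := Finset.card_pos.mpr ⟨b, hb'⟩
        rw [this, Finset.card_erase_of_mem hb']
        omega
      · -- positivity
        intro p hp
        rcases Finset.mem_insert.1 hp with rfl | hp'
        · exact hab
        · exact h1 p hp'
      · -- functional
        intro w z₁ z₂ hz₁ hz₂
        rcases Finset.mem_insert.1 hz₁ with he₁ | hm₁ <;>
          rcases Finset.mem_insert.1 hz₂ with he₂ | hm₂
        · exact (Prod.ext_iff.1 he₁).1.trans (Prod.ext_iff.1 he₂).1.symm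
        · exfalso
          have hwb : w = b := (Prod.ext_iff.1 he₁).2
          have : w ∈ C := (h4 _ hm₂).2
          rw [hwb] at this; exact hbC this
        · exfalso
          have hwb : w = b := (Prod.ext_iff.1 he₂).2
          have : w ∈ C := (h4 _ hm₁).2
          rw [hwb] at this; exact hbC this
        · exact h2 w z₁ z₂ hm₁ hm₂
      · -- acyclic
        exact acyclic_insert h3 hbC htails haC
      · -- arcs inside C'
        intro p hp
        rcases Finset.mem_insert.1 hp with rfl | hp'
        · exact ⟨Finset.mem_insert_of_mem haC, Finset.mem_insert_self b C⟩
        · exact ⟨Finset.mem_insert_of_mem (h4 p hp').1, Finset.mem_insert_of_mem (h4 p hp').2⟩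
      · -- heads
        intro y
        by_cases hyb : y = b
        · subst hyb
          constructor
          · intro _; exact ⟨a, Finset.mem_insert_self _ _⟩
          · intro _
            exact ⟨Finset.mem_insert_self _ _, fun hbR => hbC (hRC hbR)⟩
        · constructor
          · rintro ⟨hyC, hyR⟩
            rcases Finset.mem_insert.1 hyC with rfl | hyC'
            · exact absurd rfl hyb
            · obtain ⟨z, hz⟩ := (h5 y).1 ⟨hyC', hyR⟩
              exact ⟨z, Finset.mem_insert_of_mem hz⟩
          · rintro ⟨z, hz⟩
            rcases Finset.mem_insert.1 hz with he | hm'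
            · exact absurd (Prod.ext_iff.1 he).2 hyb
            · obtain ⟨h51, h52⟩ := (h5 y).2 ⟨z, hm'⟩
              exact ⟨Finset.mem_insert_of_mem h51, h52⟩
      · -- reach from roots
        intro y hy
        rcases Finset.mem_insert.1 hy with rfl | hyC
        · obtain ⟨r', hr'R, hr'a⟩ := h6 a haC
          refine ⟨r', hr'R, ?_⟩
          have : Relation.ReflTransGen (arcRel (insert (a, y) F)) r' a :=
            Relation.ReflTransGen.mono (fun u v huv => Finset.mem_insert_of_mem huv) _ _ hr'a
          exact this.tail (Finset.mem_insert_self _ _)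
        · obtain ⟨r', hr'R, hr'y⟩ := h6 y hyC
          exact ⟨r', hr'R, Relation.ReflTransGen.mono (fun u v huv => Finset.mem_insert_of_mem huv) _ _ hr'y⟩
      · -- H preserved
        intro y hy
        obtain ⟨r', hr'C, hr'y⟩ := hH y hy
        exact ⟨r', Finset.mem_insert_of_mem hr'C, hr'y⟩

def GReach (ε : Fin n → Fin n → ℝ) : Fin n → Fin n → Prop :=
  Relation.ReflTransGen (fun a b => 0 < ε a b)

def Good (ε : Fin n → Fin n → ℝ) (j : Fin n) : Prop :=
  ∀ u, GReach ε u j → GReach ε j u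

noncomputable def cl (ε : Fin n → Fin n → ℝ) (g : Fin n) : Finset (Fin n) :=
  univ.filter (fun u => GReach ε g u ∧ GReach ε u g)

noncomputable def Classes (ε : Fin n → Fin n → ℝ) : Finset (Finset (Fin n)) :=
  (univ.filter (fun g => Good ε g)).image (cl ε)

lemma mem_cl_iff {ε : Fin n → Fin n → ℝ} {g u : Fin n} :
    u ∈ cl ε g ↔ GReach ε g u ∧ GReach ε u g := by
  simp [cl]

lemma self_mem_cl {ε : Fin n → Fin n → ℝ} (g : Fin n) : g ∈ cl ε g :=
  mem_cl_iff.2 ⟨.refl, .refl⟩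

lemma cl_eq_of_mem {ε : Fin n → Fin n → ℝ} {g u : Fin n} (h : u ∈ cl ε g) :
    cl ε g = cl ε u := by
  obtain ⟨h1, h2⟩ := mem_cl_iff.1 h
  ext x
  simp only [mem_cl_iff]
  constructor
  · rintro ⟨ha, hb⟩; exact ⟨h2.trans ha, hb.trans h1⟩
  · rintro ⟨ha, hb⟩; exact ⟨h1.trans ha, hb.trans h2⟩

lemma good_of_mem_cl {ε : Fin n → Fin n → ℝ} {g u : Fin n} (hg : Good ε g)
    (h : u ∈ cl ε g) : Good ε u := by
  obtain ⟨h1, h2⟩ := mem_cl_iff.1 h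
  intro z hz
  have hzg : GReach ε z g := hz.trans h2
  exact h2.trans (hg z hzg)

lemma good_reach (ε : Fin n → Fin n → ℝ) (x : Fin n) :
    ∃ g, Good ε g ∧ GReach ε g x := by
  obtain ⟨g, h1, h2⟩ := descend (GReach ε) x
  exact ⟨g, fun u hu => rtg_flatten (h2 u hu), rtg_flatten h1⟩

lemma forest_roots_card {F : Finset (Fin n × Fin n)}
    (hfun : ∀ w z₁ z₂ : Fin n, (z₁, w) ∈ F → (z₂, w) ∈ F → z₁ = z₂) :
    F.card + (univ.filter (fun x => ∀ z, (z, x) ∉ F)).card = n := by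
  have h1 : F.card = (univ \ univ.filter (fun x => ∀ z, (z, x) ∉ F)).card := by
    apply forest_card hfun
    intro x
    simp only [Finset.mem_sdiff, Finset.mem_univ, true_and, Finset.mem_filter]
    push_neg
    simp
  rw [h1, Finset.card_sdiff_add_card_eq_card (Finset.filter_subset _ _)]
  simp

lemma roots_lb (ε : Fin n → Fin n → ℝ) {F : Finset (Fin n × Fin n)}
    (hF : IsSpForest ε F) (E : Finset (Fin n)) (hE : ∀ x ∈ E, ¬ Good ε x) :
    (Classes ε).card ≤ ((univ.filter (fun x => ∀ z, (z, x) ∉ F)) \ E).card := by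
  set roots := (univ.filter (fun x => ∀ z, (z, x) ∉ F)) \ E with hroots
  have hex : ∀ K, K ∈ Classes ε → ∃ r, r ∈ roots ∧ r ∈ K := by
    intro K hK
    obtain ⟨g, hg, rfl⟩ := Finset.mem_image.1 hK
    simp only [Finset.mem_filter, Finset.mem_univ, true_and] at hg
    obtain ⟨r, hr1, hr2⟩ := root_above hF.2.1 g
    have hGrg : GReach ε r g := Relation.ReflTransGen.mono (fun a b hab => hF.1 (a, b) hab) _ _ hr2
    have hggr : GReach ε g r := hg r hGrg
    have hrK : r ∈ cl ε g := mem_cl_iff.2 ⟨hggr, hGrg⟩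
    have hrgood : Good ε r := good_of_mem_cl hg hrK
    refine ⟨r, ?_, hrK⟩
    rw [hroots]
    refine Finset.mem_sdiff.2 ⟨by simp [hr1], fun hrE => hE r hrE hrgood⟩
  by_cases hne : (Classes ε).Nonempty
  · obtain ⟨K₀, hK₀⟩ := hne
    obtain ⟨r₀, _, _⟩ := hex K₀ hK₀
    set f : Finset (Fin n) → Fin n :=
      fun K => if h : ∃ r, r ∈ roots ∧ r ∈ K then h.choose else r₀ with hf
    have hfmem : ∀ K ∈ Classes ε, f K ∈ roots ∧ f K ∈ K := by
      intro K hK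
      have h := hex K hK
      rw [hf]
      simp only [dif_pos h]
      exact h.choose_spec
    have hinj : Set.InjOn f (↑(Classes ε) : Set (Finset (Fin n))) := by
      intro K1 hK1 K2 hK2 heq
      have h1 := (hfmem K1 hK1).2
      have h2 := (hfmem K2 hK2).2
      rw [heq] at h1
      obtain ⟨g1, _, rfl⟩ := Finset.mem_image.1 hK1
      obtain ⟨g2, _, rfl⟩ := Finset.mem_image.1 hK2
      exact (cl_eq_of_mem h1).trans (cl_eq_of_mem h2).symm
    calc (Classes ε).card = ((Classes ε).image f).card :=
          (Finset.card_image_of_injOn hinj).symm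
      _ ≤ roots.card := Finset.card_le_card (by
          intro x hx
          obtain ⟨K, hK, rfl⟩ := Finset.mem_image.1 hx
          exact (hfmem K hK).1)
  · rw [Finset.not_nonempty_iff_eq_empty.1 hne]
    simp

lemma acyclic_empty : ∀ v : Fin n, ¬ Relation.TransGen (arcRel (∅ : Finset (Fin n × Fin n))) v v := by
  intro v hv
  obtain ⟨w, _, h⟩ := Relation.TransGen.tail'_iff.1 hv
  exact (Finset.notMem_empty _) h

lemma rtg_in_reach (ε : Fin n → Fin n → ℝ) {T : Finset (Fin n)} (j x : Fin n)
    (h : GReach ε j x) (hT : ∀ y, GReach ε j y → y ∈ T) :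
    Relation.ReflTransGen (fun a b => 0 < ε a b ∧ a ∈ T ∧ b ∈ T) j x := by
  induction h with
  | refl => exact .refl
  | @tail b c h1 h2 ih => exact ih.tail ⟨h2, hT b h1, hT c (h1.tail h2)⟩

lemma rep_system (ε : Fin n → Fin n → ℝ) (j : Fin n) :
    ∃ R : Finset (Fin n), R.card = (Classes ε).card ∧
      (∀ x, ∃ r ∈ R, GReach ε r x) ∧
      (∀ r ∈ R, Good ε r) ∧
      (Good ε j → j ∈ R) ∧
      (Good ε j → ∀ r ∈ R, GReach ε j r → r = j) := by
  set rep : Finset (Fin n) → Fin n :=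
    fun K => if j ∈ K then j else if h : K.Nonempty then h.choose else j with hrep
  have hrepmem : ∀ K ∈ Classes ε, rep K ∈ K := by
    intro K hK
    obtain ⟨g, _, rfl⟩ := Finset.mem_image.1 hK
    rw [hrep]
    by_cases hjK : j ∈ cl ε g
    · simp only [if_pos hjK]; exact hjK
    · have hne : (cl ε g).Nonempty := ⟨g, self_mem_cl g⟩
      simp only [if_neg hjK, dif_pos hne]
      exact hne.choose_spec
  have hclK : ∀ K ∈ Classes ε, K = cl ε (rep K) := by
    intro K hK
    obtain ⟨g, _, hgK⟩ := Finset.mem_image.1 hK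
    rw [← hgK]
    exact cl_eq_of_mem (hgK ▸ hrepmem K hK)
  refine ⟨(Classes ε).image rep, ?_, ?_, ?_, ?_, ?_⟩
  · apply Finset.card_image_of_injOn
    intro K1 hK1 K2 hK2 heq
    rw [hclK K1 hK1, hclK K2 hK2, heq]
  · intro x
    obtain ⟨g, hg, hgx⟩ := good_reach ε x
    have hKcl : cl ε g ∈ Classes ε :=
      Finset.mem_image.2 ⟨g, by simp [hg], rfl⟩
    refine ⟨rep (cl ε g), Finset.mem_image.2 ⟨cl ε g, hKcl, rfl⟩, ?_⟩
    have := mem_cl_iff.1 (hrepmem _ hKcl)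
    exact this.2.trans hgx
  · intro r hr
    obtain ⟨K, hK, rfl⟩ := Finset.mem_image.1 hr
    obtain ⟨g, hg, hgK⟩ := Finset.mem_image.1 hK
    simp only [Finset.mem_filter, Finset.mem_univ, true_and] at hg
    exact good_of_mem_cl hg (hgK ▸ hrepmem K hK)
  · intro hj
    have hKcl : cl ε j ∈ Classes ε :=
      Finset.mem_image.2 ⟨j, by simp [hj], rfl⟩
    refine Finset.mem_image.2 ⟨cl ε j, hKcl, ?_⟩
    rw [hrep]
    simp [self_mem_cl j]
  · intro hj r hr hjr
    obtain ⟨K, hK, rfl⟩ := Finset.mem_image.1 hr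
    have hrK := hrepmem K hK
    have hrgood : Good ε (rep K) := by
      obtain ⟨g, hg, hgK⟩ := Finset.mem_image.1 hK
      simp only [Finset.mem_filter, Finset.mem_univ, true_and] at hg
      exact good_of_mem_cl hg (hgK ▸ hrK)
    have hrj : GReach ε (rep K) j := hrgood j hjr
    have hjK : j ∈ K := by
      rw [hclK K hK]
      exact mem_cl_iff.2 ⟨hrj, hjr⟩
    rw [hrep]
    simp [if_pos hjK]

lemma exists_base_forest (ε : Fin n → Fin n → ℝ) (j : Fin n) :
    ∃ F, IsSpForest ε F ∧ F.card + (Classes ε).card = n := by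
  obtain ⟨R, hRcard, hRreach, -, -, -⟩ := rep_system ε j
  obtain ⟨F₂, -, k1, k2, k3, -, k5, -⟩ := grow ε univ R (univ \ R).card R ∅ le_rfl
    (Finset.Subset.refl R) (Finset.subset_univ R) (by simp) (by simp) acyclic_empty
    (by simp) (by simp) (fun x hx => ⟨x, hx, .refl⟩)
    (fun x _ => by
      obtain ⟨r, hr, hrx⟩ := hRreach x
      exact ⟨r, hr, Relation.ReflTransGen.mono (fun a b hab => ⟨hab, Finset.mem_univ a, Finset.mem_univ b⟩) _ _ hrx⟩)
  refine ⟨F₂, ⟨k1, k3, k2⟩, ?_⟩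
  have hc : F₂.card = (univ \ R).card := by
    apply forest_card k2
    intro x
    rw [← k5 x]
    simp
  have hcc := Finset.card_sdiff_add_card_eq_card (Finset.subset_univ R)
  simp only [Finset.card_univ, Fintype.card_fin] at hcc
  omega

lemma exists_good_forest (ε : Fin n → Fin n → ℝ) (j i : Fin n) (hj : Good ε j)
    (hij : GReach ε j i) :
    ∃ F, IsSpForest ε F ∧ F.card + (Classes ε).card = n ∧ (∀ u, (u, j) ∉ F) ∧
      Relation.ReflTransGen (arcRel F) j i := by
  obtain ⟨R, hRcard, hRreach, hRgood, hjRf, hlastf⟩ := rep_system ε j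
  have hjR := hjRf hj
  have hjD : j ∈ univ.filter (fun y => GReach ε j y) :=
    Finset.mem_filter.2 ⟨Finset.mem_univ j, .refl⟩
  have hiD : i ∈ univ.filter (fun y => GReach ε j y) :=
    Finset.mem_filter.2 ⟨Finset.mem_univ i, hij⟩
  have hDmem : ∀ x, x ∈ univ.filter (fun y => GReach ε j y) ↔ GReach ε j x := by
    intro x; simp
  obtain ⟨F₁, -, g1, g2, g3, g4, g5, g6⟩ := grow ε (univ.filter (fun y => GReach ε j y))
    {j} ((univ.filter (fun y => GReach ε j y)) \ {j}).card {j} ∅ le_rfl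
    (Finset.Subset.refl _) (Finset.singleton_subset_iff.2 hjD) (by simp) (by simp)
    acyclic_empty (by simp) (by simp)
    (fun x hx => ⟨j, Finset.mem_singleton_self j, by
      rw [Finset.mem_singleton] at hx; subst hx; exact .refl⟩)
    (fun x hxD => ⟨j, Finset.mem_singleton_self j,
      rtg_in_reach ε j x ((hDmem x).1 hxD) (fun y hy => (hDmem y).2 hy)⟩)
  have hF1ji : Relation.ReflTransGen (arcRel F₁) j i := by
    obtain ⟨r, hr, hrtg⟩ := g6 i hiD
    rw [Finset.mem_singleton] at hr
    subst hr
    exact hrtg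
  have hDR : ∀ x, x ∈ univ.filter (fun y => GReach ε j y) → (x ∈ R ↔ x = j) := by
    intro x hxD
    constructor
    · intro hxR; exact hlastf hj x hxR ((hDmem x).1 hxD)
    · rintro rfl; exact hjR
  obtain ⟨F₂, hs2, k1, k2, k3, k4, k5, k6⟩ := grow ε univ R
    (univ \ ((univ.filter (fun y => GReach ε j y)) ∪ R)).card
    ((univ.filter (fun y => GReach ε j y)) ∪ R) F₁ le_rfl
    Finset.subset_union_right (Finset.subset_univ _) g1 g2 g3
    (fun p hp => ⟨Finset.mem_union_left R (g4 p hp).1, Finset.mem_union_left R (g4 p hp).2⟩)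
    (by
      intro x
      constructor
      · rintro ⟨hxDR, hxR⟩
        have hxD : x ∈ univ.filter (fun y => GReach ε j y) := by
          rcases Finset.mem_union.1 hxDR with h | h
          · exact h
          · exact absurd h hxR
        have hxj : x ∉ ({j} : Finset (Fin n)) := by
          rw [Finset.mem_singleton]
          rintro rfl; exact hxR hjR
        exact (g5 x).1 ⟨hxD, hxj⟩
      · intro hzx
        obtain ⟨hxD, hxj⟩ := (g5 x).2 hzx
        rw [Finset.mem_singleton] at hxj
        exact ⟨Finset.mem_union_left R hxD, fun hxR => hxj ((hDR x hxD).1 hxR)⟩)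
    (by
      intro x hx
      rcases Finset.mem_union.1 hx with h | h
      · obtain ⟨r, hr, hrtg⟩ := g6 x h
        rw [Finset.mem_singleton] at hr
        exact ⟨j, hjR, by rwa [hr] at hrtg⟩
      · exact ⟨x, h, .refl⟩)
    (fun x _ => by
      obtain ⟨r, hr, hrx⟩ := hRreach x
      exact ⟨r, Finset.mem_union_right _ hr,
        Relation.ReflTransGen.mono (fun a b hab => ⟨hab, Finset.mem_univ a, Finset.mem_univ b⟩) _ _ hrx⟩)
  refine ⟨F₂, ⟨k1, k3, k2⟩, ?_, ?_, ?_⟩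
  · have hc : F₂.card = (univ \ R).card := by
      apply forest_card k2
      intro x
      rw [← k5 x]
      simp
    have hcc := Finset.card_sdiff_add_card_eq_card (Finset.subset_univ R)
    simp only [Finset.card_univ, Fintype.card_fin] at hcc
    omega
  · intro u hu
    exact ((k5 j).2 ⟨u, hu⟩).2 hjR
  · exact Relation.ReflTransGen.mono (fun a b hab => hs2 hab) _ _ hF1ji

lemma knot_good (ε : Fin n → Fin n → ℝ) {K : Finset (Fin n)} (hK : IsUndomKnot ε K)
    {j : Fin n} (hj : j ∈ K) : Good ε j := by
  intro u hu
  have hback : ∀ x y : Fin n, Relation.ReflTransGen (fun a b => 0 < ε a b) x y →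
      y ∈ K → x ∈ K := by
    intro x y h
    induction h with
    | refl => exact id
    | @tail b c h1 h2 ih => exact fun hc => ih (hK.2.2 b c h2 hc)
  exact hK.2.1 j hj u (hback u j hu hj)

lemma good_knot (ε : Fin n → Fin n → ℝ) {j : Fin n} (hj : Good ε j) :
    ∃ K, IsUndomKnot ε K ∧ j ∈ K := by
  refine ⟨cl ε j, ⟨⟨j, self_mem_cl j⟩, ?_, ?_⟩, self_mem_cl j⟩
  · intro x hx y hy
    exact (mem_cl_iff.1 hx).2.trans (mem_cl_iff.1 hy).1
  · intro a b hab hb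
    obtain ⟨h1, h2⟩ := mem_cl_iff.1 hb
    have haj : GReach ε a j := Relation.ReflTransGen.head hab h2
    exact mem_cl_iff.2 ⟨hj a haj, haj⟩

lemma maxArcs_add (ε : Fin n → Fin n → ℝ) (j : Fin n) :
    maxArcs ε + (Classes ε).card = n := by
  obtain ⟨F₀, hF₀, hcard⟩ := exists_base_forest ε j
  have hub : ∀ F' ∈ univ.filter (fun F : Finset (Fin n × Fin n) => IsSpForest ε F),
      F'.card ≤ F₀.card := by
    intro F' hF'
    rw [Finset.mem_filter] at hF'
    have h1 := forest_roots_card hF'.2.2.2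
    have h2 := roots_lb ε hF'.2 ∅ (by simp)
    rw [Finset.sdiff_empty] at h2
    omega
  have hle : maxArcs ε ≤ F₀.card := Finset.sup_le hub
  have hge : F₀.card ≤ maxArcs ε :=
    Finset.le_sup (Finset.mem_filter.2 ⟨Finset.mem_univ F₀, hF₀⟩)
  omega

lemma qmax_ne (ε : Fin n → Fin n → ℝ) (i j : Fin n) :
    Qmax ε i j ≠ 0 ↔ (forestsKji ε (maxArcs ε) j i).Nonempty := by
  have hq : Qmax ε i j = ∑ F ∈ forestsKji ε (maxArcs ε) j i, fweight ε F := rfl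
  constructor
  · intro h
    by_contra hne
    rw [Finset.not_nonempty_iff_eq_empty] at hne
    rw [hq, hne, Finset.sum_empty] at h
    exact h rfl
  · intro hne
    have hpos : 0 < ∑ F ∈ forestsKji ε (maxArcs ε) j i, fweight ε F := by
      apply Finset.sum_pos _ hne
      intro F hF
      have hsp : IsSpForest ε F := by
        simp only [forestsKji, forestsK, Finset.mem_filter] at hF
        exact hF.1.2.1
      show (0 : ℝ) < ∏ p ∈ F, ε p.1 p.2
      exact Finset.prod_pos (fun p hp => hsp.1 p hp)
    rw [hq]
    exact ne_of_gt hpos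

/-- `q_{ij} ≠ 0` iff `j` lies in some undominated knot and `i` is reachable from `j`. -/
theorem stmt14 (ε : Fin n → Fin n → ℝ) (hnonneg : ∀ i j, 0 ≤ ε i j)
    (hloop : ∀ i, ε i i = 0) (i j : Fin n) :
    Qmax ε i j ≠ 0 ↔
      (∃ K : Finset (Fin n), IsUndomKnot ε K ∧ j ∈ K) ∧
        Relation.ReflTransGen (fun a b => 0 < ε a b) j i := by
  rw [qmax_ne]
  constructor
  · rintro ⟨F, hF⟩
    simp only [forestsKji, forestsK, Finset.mem_filter] at hF
    obtain ⟨⟨-, hsp, hcard⟩, hnoin, hrtg⟩ := hF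
    have hji : Relation.ReflTransGen (fun a b => 0 < ε a b) j i :=
      Relation.ReflTransGen.mono (fun a b hab => hsp.1 (a, b) hab) _ _ hrtg
    refine ⟨?_, hji⟩
    have hgood : Good ε j := by
      by_contra hbad
      have h1 := forest_roots_card hsp.2.2
      have h2 := roots_lb ε hsp {j} (by
        intro x hx
        rw [Finset.mem_singleton] at hx
        subst hx
        exact hbad)
      have hjroot : j ∈ univ.filter (fun x => ∀ z, (z, x) ∉ F) := by
        simp only [Finset.mem_filter, Finset.mem_univ, true_and]
        exact fun z => hnoin z
      have her : (univ.filter (fun x => ∀ z, (z, x) ∉ F) \ {j}).card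
          = (univ.filter (fun x => ∀ z, (z, x) ∉ F)).card - 1 := by
        rw [Finset.sdiff_singleton_eq_erase, Finset.card_erase_of_mem hjroot]
      have hpos : 0 < (univ.filter (fun x => ∀ z, (z, x) ∉ F)).card :=
        Finset.card_pos.2 ⟨j, hjroot⟩
      have hmax := maxArcs_add ε j
      omega
    exact good_knot ε hgood
  · rintro ⟨⟨K, hK, hjK⟩, hji⟩
    have hgood := knot_good ε hK hjK
    obtain ⟨F, hsp, hcard, hnoin, hrtg⟩ := exists_good_forest ε j i hgood hji
    have hmax := maxArcs_add ε j
    refine ⟨F, ?_⟩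
    simp only [forestsKji, forestsK, Finset.mem_filter]
    exact ⟨⟨Finset.mem_univ F, hsp, by omega⟩, hnoin, hrtg⟩
end

section
/- The normalized matrix of maximum out forests J̄ of any weighted digraph is idempotent: J̄² = J̄. -/
open scoped Classical
open Finset

variable {n : ℕ}

-- ===== auxiliary infrastructure =====
namespace Ca

open Relation

/-- Reachability. -/
abbrev Rch (F : Finset (Fin n × Fin n)) : Fin n → Fin n → Prop :=
  Relation.ReflTransGen (arcRel F)

lemma rch_mono {F G : Finset (Fin n × Fin n)} (h : F ⊆ G) {a b : Fin n} (hr : Rch F a b) :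
    Rch G a b :=
  ReflTransGen.mono (fun _ _ hx => h hx) _ _ hr

lemma rch_eq_of_noIn {F : Finset (Fin n × Fin n)} {j x : Fin n} (h : ∀ u, (u, j) ∉ F)
    (hr : Rch F x j) : x = j := by
  rcases hr.cases_tail with h1 | ⟨c, _, hc⟩
  · exact h1.symm
  · exact absurd hc (h c)

lemma reach_insert {F : Finset (Fin n × Fin n)} {e : Fin n × Fin n} {a b : Fin n}
    (h : Rch (insert e F) a b) : Rch F a b ∨ (Rch F a e.1 ∧ Rch F e.2 b) := by
  induction h with
  | refl => exact Or.inl ReflTransGen.refl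
  | tail hab hbc ih =>
    rcases Finset.mem_insert.1 hbc with he | hF
    · cases he.symm
      exact Or.inr ⟨ih.elim id And.left, ReflTransGen.refl⟩
    · rcases ih with h1 | ⟨h1, h2⟩
      · exact Or.inl (h1.tail hF)
      · exact Or.inr ⟨h1, h2.tail hF⟩

lemma transGen_insert {F : Finset (Fin n × Fin n)} {e : Fin n × Fin n} {a b : Fin n}
    (h : Relation.TransGen (arcRel (insert e F)) a b) :
    Relation.TransGen (arcRel F) a b ∨ (Rch F a e.1 ∧ Rch F e.2 b) := by
  induction h with
  | single hab =>
    rcases Finset.mem_insert.1 hab with he | hF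
    · cases he.symm
      exact Or.inr ⟨ReflTransGen.refl, ReflTransGen.refl⟩
    · exact Or.inl (TransGen.single hF)
  | tail hab hbc ih =>
    rcases Finset.mem_insert.1 hbc with he | hF
    · cases he.symm
      exact Or.inr ⟨ih.elim TransGen.to_reflTransGen And.left, ReflTransGen.refl⟩
    · rcases ih with h1 | ⟨h1, h2⟩
      · exact Or.inl (h1.tail hF)
      · exact Or.inr ⟨h1, h2.tail hF⟩

lemma reach_erase {F : Finset (Fin n × Fin n)} {a b : Fin n} (e : Fin n × Fin n)
    (h : Rch F a b) : Rch (F.erase e) a b ∨ Rch (F.erase e) e.2 b := by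
  induction h with
  | refl => exact Or.inl ReflTransGen.refl
  | @tail x y hab hbc ih =>
    by_cases hxy : (x, y) = e
    · cases hxy
      exact Or.inr ReflTransGen.refl
    · have harc : arcRel (F.erase e) x y := Finset.mem_erase.2 ⟨hxy, hbc⟩
      rcases ih with h1 | h1
      · exact Or.inl (h1.tail harc)
      · exact Or.inr (h1.tail harc)

lemma reach_erase_of_not {F : Finset (Fin n × Fin n)} {a b u v : Fin n}
    (h : Rch F a b) (hn : ¬ Rch F a u) : Rch (F.erase (u, v)) a b := by
  induction h with
  | refl => exact ReflTransGen.refl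
  | @tail x y hab hbc ih =>
    refine ih.tail (Finset.mem_erase.2 ⟨?_, hbc⟩)
    intro hxy
    obtain ⟨rfl, rfl⟩ := Prod.mk.injEq .. ▸ hxy
    exact hn hab

lemma not_rch_of_arc {F : Finset (Fin n × Fin n)} {a b : Fin n}
    (hac : ∀ v, ¬ Relation.TransGen (arcRel F) v v) (h : (a, b) ∈ F) : ¬ Rch F b a :=
  fun hr => hac b (Relation.TransGen.tail' hr h)

lemma no_self_arc {F : Finset (Fin n × Fin n)} {a : Fin n}
    (hac : ∀ v, ¬ Relation.TransGen (arcRel F) v v) : (a, a) ∉ F :=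
  fun h => hac a (Relation.TransGen.single h)

/-- Two ancestors of a common vertex are comparable. -/
lemma rch_comparable {F : Finset (Fin n × Fin n)}
    (hd : ∀ w z₁ z₂, (z₁, w) ∈ F → (z₂, w) ∈ F → z₁ = z₂) {a x : Fin n}
    (ha : Rch F a x) : ∀ b : Fin n, Rch F b x → Rch F a b ∨ Rch F b a := by
  induction ha with
  | refl => exact fun b hb => Or.inr hb
  | @tail y z hay hyz ih =>
    intro b hb
    rcases hb.cases_tail with h1 | ⟨c, hbc, hcz⟩
    · exact Or.inl (h1 ▸ hay.tail hyz)
    · exact ih b ((hd z y c hyz hcz) ▸ hbc)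

/-- Unique child of `j` on the way to `x`. -/
lemma child_unique {F : Finset (Fin n × Fin n)} (hF : IsDivForest F) {j m₁ m₂ x : Fin n}
    (h1 : (j, m₁) ∈ F) (h2 : (j, m₂) ∈ F) (r1 : Rch F m₁ x) (r2 : Rch F m₂ x) :
    m₁ = m₂ := by
  have key : ∀ a b : Fin n, (j, a) ∈ F → (j, b) ∈ F → Rch F a b → a = b := by
    intro a b haF hbF hab
    rcases hab.cases_tail with h | ⟨c, hac, hcb⟩
    · exact h.symm
    · have hcj : c = j := hF.2 b c j hcb hbF
      exact absurd (Relation.TransGen.tail' (hcj ▸ hac) haF) (hF.1 a)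
  rcases rch_comparable hF.2 r1 m₂ r2 with h | h
  · exact key _ _ h1 h2 h
  · exact (key _ _ h2 h1 h).symm

lemma spForest_subset {ε : Fin n → Fin n → ℝ} {F G : Finset (Fin n × Fin n)}
    (hG : IsSpForest ε G) (h : F ⊆ G) : IsSpForest ε F := by
  refine ⟨fun p hp => hG.1 p (h hp), fun v hv => hG.2.1 v (TransGen.mono (fun a b hab => h hab) _ _ hv),
    fun w z₁ z₂ h1 h2 => hG.2.2 w z₁ z₂ (h h1) (h h2)⟩

lemma spForest_insert {ε : Fin n → Fin n → ℝ} {F : Finset (Fin n × Fin n)} {u v : Fin n}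
    (hF : IsSpForest ε F) (hpos : 0 < ε u v) (hv : ∀ z, (z, v) ∉ F)
    (hnr : ¬ Rch F v u) : IsSpForest ε (insert (u, v) F) := by
  refine ⟨?_, ?_, ?_⟩
  · intro p hp
    rcases Finset.mem_insert.1 hp with rfl | hp
    · exact hpos
    · exact hF.1 p hp
  · intro x hx
    rcases transGen_insert hx with h | ⟨h1, h2⟩
    · exact hF.2.1 x h
    · exact hnr (h2.trans h1)
  · intro w z₁ z₂ h1 h2
    simp only [Finset.mem_insert, Prod.mk.injEq] at h1 h2
    rcases h1 with ⟨rfl, rfl⟩ | h1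
    · rcases h2 with ⟨rfl, -⟩ | h2
      · rfl
      · exact absurd h2 (hv z₂)
    · rcases h2 with ⟨rfl, rfl⟩ | h2
      · exact absurd h1 (hv z₁)
      · exact hF.2.2 w z₁ z₂ h1 h2

/-- The child of `j` on the unique path towards `x`. -/
noncomputable def childTo (F : Finset (Fin n × Fin n)) (j x : Fin n) : Fin n :=
  if h : ∃ m, (j, m) ∈ F ∧ Rch F m x then h.choose else j

lemma childTo_spec {F : Finset (Fin n × Fin n)} {j x : Fin n}
    (h : ∃ m, (j, m) ∈ F ∧ Rch F m x) :
    (j, childTo F j x) ∈ F ∧ Rch F (childTo F j x) x := by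
  rw [childTo, dif_pos h]; exact h.choose_spec

lemma childTo_eq {F : Finset (Fin n × Fin n)} (hF : IsDivForest F) {j m x : Fin n}
    (hm : (j, m) ∈ F) (hr : Rch F m x) : childTo F j x = m := by
  have h : ∃ m, (j, m) ∈ F ∧ Rch F m x := ⟨m, hm, hr⟩
  obtain ⟨h1, h2⟩ := childTo_spec h
  exact child_unique hF h1 hm h2 hr

lemma exists_child {F : Finset (Fin n × Fin n)} {j x : Fin n} (h : Rch F j x)
    (hne : j ≠ x) : ∃ m, (j, m) ∈ F ∧ Rch F m x := by
  rcases h.cases_head with rfl | ⟨c, hc, hcx⟩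
  · exact absurd rfl hne
  · exact ⟨c, hc, hcx⟩

/-- The parent of `j`. -/
noncomputable def parentOf (F : Finset (Fin n × Fin n)) (j : Fin n) : Fin n :=
  if h : ∃ p, (p, j) ∈ F then h.choose else j

lemma parentOf_spec {F : Finset (Fin n × Fin n)} {j : Fin n} (h : ∃ p, (p, j) ∈ F) :
    (parentOf F j, j) ∈ F := by
  rw [parentOf, dif_pos h]; exact h.choose_spec

lemma parentOf_eq {F : Finset (Fin n × Fin n)} (hF : IsDivForest F) {p j : Fin n}
    (hp : (p, j) ∈ F) : parentOf F j = p :=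
  hF.2 j _ p (parentOf_spec ⟨p, hp⟩) hp

lemma mem_forestsK {ε : Fin n → Fin n → ℝ} {k : ℕ} {F : Finset (Fin n × Fin n)} :
    F ∈ forestsK ε k ↔ IsSpForest ε F ∧ F.card = k := by
  simp [forestsK]

lemma mem_forestsKji {ε : Fin n → Fin n → ℝ} {k : ℕ} {j i : Fin n}
    {F : Finset (Fin n × Fin n)} :
    F ∈ forestsKji ε k j i ↔ (IsSpForest ε F ∧ F.card = k) ∧
      (∀ u, (u, j) ∉ F) ∧ Relation.ReflTransGen (arcRel F) j i := by
  simp [forestsKji, mem_forestsK, Finset.mem_filter]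

lemma fweight_insert {ε : Fin n → Fin n → ℝ} {F : Finset (Fin n × Fin n)}
    {e : Fin n × Fin n} (h : e ∉ F) :
    fweight ε (insert e F) = ε e.1 e.2 * fweight ε F := by
  rw [fweight, Finset.prod_insert h]; rfl

lemma fweight_erase {ε : Fin n → Fin n → ℝ} {F : Finset (Fin n × Fin n)}
    {e : Fin n × Fin n} (h : e ∈ F) :
    ε e.1 e.2 * fweight ε (F.erase e) = fweight ε F := by
  exact Finset.mul_prod_erase F (fun p => ε p.1 p.2) h

variable {ε : Fin n → Fin n → ℝ}

/-- Bijection 4: attaching a root `j` (i = j, case `p` not below `j`). -/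
lemma bij4 (hloop : ∀ i, ε i i = 0) (k : ℕ) (j : Fin n) :
    ∑ q ∈ (Finset.univ.filter (fun q : Fin n × Finset (Fin n × Fin n) =>
        0 < ε q.1 j ∧ q.2 ∈ forestsKji ε k j j ∧ ¬ Rch q.2 j q.1)),
      fweight ε q.2 * ε q.1 j
    = ∑ G ∈ (forestsK ε (k+1)).filter (fun G => ¬ (∀ u, (u, j) ∉ G)), fweight ε G := by
  refine Finset.sum_bij' (fun q _ => insert (q.1, j) q.2)
    (fun G _ => (parentOf G j, G.erase (parentOf G j, j))) ?_ ?_ ?_ ?_ ?_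
  · rintro ⟨p, F⟩ hq
    simp only [Finset.mem_filter, Finset.mem_univ, true_and] at hq
    obtain ⟨hpos, hF, hnr⟩ := hq
    obtain ⟨⟨hsp, hcard⟩, hroot, -⟩ := mem_forestsKji.1 hF
    have hpj : (p, j) ∉ F := hroot p
    simp only [Finset.mem_filter, mem_forestsK]
    refine ⟨⟨spForest_insert hsp hpos hroot hnr, ?_⟩, ?_⟩
    · rw [Finset.card_insert_of_notMem hpj, hcard]
    · push_neg
      exact ⟨p, Finset.mem_insert_self _ _⟩
  · intro G hG
    simp only [Finset.mem_filter, mem_forestsK] at hG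
    obtain ⟨⟨hsp, hcard⟩, hnr⟩ := hG
    push_neg at hnr
    obtain ⟨u, hu⟩ := hnr
    have hp : (parentOf G j, j) ∈ G := parentOf_spec ⟨u, hu⟩
    set p := parentOf G j with hpdef
    simp only [Finset.mem_filter, Finset.mem_univ, true_and]
    refine ⟨hsp.1 _ hp, mem_forestsKji.2 ⟨⟨spForest_subset hsp (Finset.erase_subset _ _), ?_⟩,
      ?_, Relation.ReflTransGen.refl⟩, ?_⟩
    · rw [Finset.card_erase_of_mem hp, hcard]; omega
    · intro u' hu'
      have := hsp.2.2 j u' p (Finset.mem_erase.1 hu').2 hp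
      exact (Finset.mem_erase.1 hu').1 (by rw [this])
    · intro hr
      exact not_rch_of_arc hsp.2.1 hp (rch_mono (Finset.erase_subset _ _) hr)
  · rintro ⟨p, F⟩ hq
    simp only [Finset.mem_filter, Finset.mem_univ, true_and] at hq
    obtain ⟨hpos, hF, hnr⟩ := hq
    obtain ⟨⟨hsp, hcard⟩, hroot, -⟩ := mem_forestsKji.1 hF
    have hins : IsSpForest ε (insert (p, j) F) := spForest_insert hsp hpos hroot hnr
    have hpar : parentOf (insert (p, j) F) j = p :=
      parentOf_eq hins.2 (Finset.mem_insert_self _ _)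
    simp only [hpar, Finset.erase_insert (hroot p)]
  · intro G hG
    simp only [Finset.mem_filter, mem_forestsK] at hG
    obtain ⟨⟨hsp, hcard⟩, hnr⟩ := hG
    push_neg at hnr
    obtain ⟨u, hu⟩ := hnr
    exact Finset.insert_erase (parentOf_spec ⟨u, hu⟩)
  · rintro ⟨p, F⟩ hq
    simp only [Finset.mem_filter, Finset.mem_univ, true_and] at hq
    obtain ⟨hpos, hF, hnr⟩ := hq
    obtain ⟨⟨hsp, hcard⟩, hroot, -⟩ := mem_forestsKji.1 hF
    rw [fweight_insert (hroot p), mul_comm]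

/-- Bijection 1: detaching the first arc of the path from the root `j` to `i` (i ≠ j). -/
lemma bij1 (hloop : ∀ i, ε i i = 0) (k : ℕ) {j i : Fin n} (hij : j ≠ i) :
    ∑ G ∈ forestsKji ε (k+1) j i, fweight ε G
    = ∑ q ∈ (Finset.univ.filter (fun q : Fin n × Finset (Fin n × Fin n) =>
        0 < ε j q.1 ∧ q.2 ∈ forestsKji ε k q.1 i ∧ (∀ u, (u, j) ∉ q.2))),
      fweight ε q.2 * ε j q.1 := by
  refine Finset.sum_bij' (fun G _ => (childTo G j i, G.erase (j, childTo G j i)))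
    (fun q _ => insert (j, q.1) q.2) ?_ ?_ ?_ ?_ ?_
  · intro G hG
    obtain ⟨⟨hsp, hcard⟩, hroot, hreach⟩ := mem_forestsKji.1 hG
    obtain ⟨hm, hrm⟩ := childTo_spec (exists_child hreach hij)
    set m := childTo G j i with hmdef
    simp only [Finset.mem_filter, Finset.mem_univ, true_and]
    refine ⟨hsp.1 _ hm, mem_forestsKji.2 ⟨⟨spForest_subset hsp (Finset.erase_subset _ _), ?_⟩,
      ?_, reach_erase_of_not hrm (not_rch_of_arc hsp.2.1 hm)⟩, ?_⟩
    · rw [Finset.card_erase_of_mem hm, hcard]; omega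
    · intro u hu
      have := hsp.2.2 m u j (Finset.mem_erase.1 hu).2 hm
      exact (Finset.mem_erase.1 hu).1 (by rw [this])
    · intro u hu
      exact hroot u (Finset.erase_subset _ _ hu)
  · rintro ⟨m, F⟩ hq
    simp only [Finset.mem_filter, Finset.mem_univ, true_and] at hq
    obtain ⟨hpos, hF, hrootj⟩ := hq
    obtain ⟨⟨hsp, hcard⟩, hrootm, hreach⟩ := mem_forestsKji.1 hF
    have hmj : m ≠ j := fun h => by simp [h, hloop j] at hpos
    have hins : IsSpForest ε (insert (j, m) F) := spForest_insert hsp hpos hrootm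
      (fun hr => hmj (rch_eq_of_noIn hrootj hr))
    refine mem_forestsKji.2 ⟨⟨hins, ?_⟩, ?_, ?_⟩
    · rw [Finset.card_insert_of_notMem (hrootm j), hcard]
    · intro u hu
      rcases Finset.mem_insert.1 hu with he | hu
      · simp only [Prod.mk.injEq] at he
        exact absurd he.2.symm hmj
      · exact hrootj u hu
    · exact Relation.ReflTransGen.head (Finset.mem_insert_self _ _)
        (rch_mono (Finset.subset_insert _ _) hreach)
  · intro G hG
    obtain ⟨⟨hsp, hcard⟩, hroot, hreach⟩ := mem_forestsKji.1 hG
    obtain ⟨hm, hrm⟩ := childTo_spec (exists_child hreach hij)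
    exact Finset.insert_erase hm
  · rintro ⟨m, F⟩ hq
    simp only [Finset.mem_filter, Finset.mem_univ, true_and] at hq
    obtain ⟨hpos, hF, hrootj⟩ := hq
    obtain ⟨⟨hsp, hcard⟩, hrootm, hreach⟩ := mem_forestsKji.1 hF
    have hmj : m ≠ j := fun h => by simp [h, hloop j] at hpos
    have hins : IsSpForest ε (insert (j, m) F) := spForest_insert hsp hpos hrootm
      (fun hr => hmj (rch_eq_of_noIn hrootj hr))
    have hct : childTo (insert (j, m) F) j i = m :=
      childTo_eq hins.2 (Finset.mem_insert_self _ _)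
        (rch_mono (Finset.subset_insert _ _) hreach)
    simp only [hct, Finset.erase_insert (hrootm j)]
  · intro G hG
    obtain ⟨⟨hsp, hcard⟩, hroot, hreach⟩ := mem_forestsKji.1 hG
    obtain ⟨hm, hrm⟩ := childTo_spec (exists_child hreach hij)
    rw [mul_comm, fweight_erase hm]

/-- Bijection 3: rerooting (i = j, case `p` below `j`). -/
lemma bij3 (hloop : ∀ i, ε i i = 0) (k : ℕ) (j : Fin n) :
    ∑ q ∈ (Finset.univ.filter (fun q : Fin n × Finset (Fin n × Fin n) =>
        0 < ε q.1 j ∧ q.2 ∈ forestsKji ε k j j ∧ Rch q.2 j q.1)),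
      fweight ε q.2 * ε q.1 j
    = ∑ q ∈ (Finset.univ.filter (fun q : Fin n × Finset (Fin n × Fin n) =>
        0 < ε j q.1 ∧ q.2 ∈ forestsKji ε k q.1 j)),
      fweight ε q.2 * ε j q.1 := by
  refine Finset.sum_bij'
    (fun q _ => (childTo q.2 j q.1, insert (q.1, j) (q.2.erase (j, childTo q.2 j q.1))))
    (fun q _ => (parentOf q.2 j, insert (j, q.1) (q.2.erase (parentOf q.2 j, j))))
    ?_ ?_ ?_ ?_ ?_
  · rintro ⟨p, F⟩ hq
    simp only [Finset.mem_filter, Finset.mem_univ, true_and] at hq ⊢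
    obtain ⟨hpos, hF, hrjp⟩ := hq
    obtain ⟨⟨hsp, hcard⟩, hrootj, -⟩ := mem_forestsKji.1 hF
    have hpj : p ≠ j := fun h => by simp [h, hloop j] at hpos
    obtain ⟨hm, hrmp⟩ := childTo_spec (exists_child hrjp (Ne.symm hpj))
    set m := childTo F j p with hmdef
    have hmj : m ≠ j := fun h => no_self_arc hsp.2.1 (h ▸ hm)
    have hF₀ : IsSpForest ε (F.erase (j, m)) := spForest_subset hsp (Finset.erase_subset _ _)
    have hnoj₀ : ∀ u, (u, j) ∉ F.erase (j, m) := fun u hu => hrootj u (Finset.erase_subset _ _ hu)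
    have hnom₀ : ∀ u, (u, m) ∉ F.erase (j, m) := by
      intro u hu
      have := hsp.2.2 m u j (Finset.mem_erase.1 hu).2 hm
      exact (Finset.mem_erase.1 hu).1 (by rw [this])
    have hrmp₀ : Rch (F.erase (j, m)) m p :=
      reach_erase_of_not hrmp (not_rch_of_arc hsp.2.1 hm)
    have hnjp₀ : ¬ Rch (F.erase (j, m)) j p := by
      intro hr
      obtain ⟨m', hm', hrm'⟩ := exists_child hr (Ne.symm hpj)
      have : m' = m := child_unique hsp.2 (Finset.erase_subset _ _ hm') hm
        (rch_mono (Finset.erase_subset _ _) hrm') hrmp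
      exact (Finset.mem_erase.1 hm').1 (by rw [this])
    have hins : IsSpForest ε (insert (p, j) (F.erase (j, m))) :=
      spForest_insert hF₀ hpos hnoj₀ hnjp₀
    have hk : 0 < k := hcard ▸ Finset.card_pos.2 ⟨_, hm⟩
    refine ⟨hsp.1 _ hm, mem_forestsKji.2 ⟨⟨hins, ?_⟩, ?_, ?_⟩⟩
    · rw [Finset.card_insert_of_notMem (hnoj₀ p), Finset.card_erase_of_mem hm, hcard]
      omega
    · intro u hu
      rcases Finset.mem_insert.1 hu with he | hu
      · simp only [Prod.mk.injEq] at he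
        exact hmj he.2
      · exact hnom₀ u hu
    · exact Relation.ReflTransGen.tail (rch_mono (Finset.subset_insert _ _) hrmp₀)
        (Finset.mem_insert_self _ _)
  · rintro ⟨m, F'⟩ hq
    simp only [Finset.mem_filter, Finset.mem_univ, true_and] at hq ⊢
    obtain ⟨hpos, hF⟩ := hq
    obtain ⟨⟨hsp, hcard⟩, hrootm, hrmj⟩ := mem_forestsKji.1 hF
    have hmj : m ≠ j := fun h => by simp [h, hloop j] at hpos
    obtain ⟨c, hrc, hcj⟩ : ∃ c, Rch F' m c ∧ (c, j) ∈ F' := by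
      rcases hrmj.cases_tail with h | h
      · exact absurd h.symm hmj
      · exact h
    have hp : (parentOf F' j, j) ∈ F' := parentOf_spec ⟨c, hcj⟩
    set p := parentOf F' j with hpdef
    have hrmp : Rch F' m p := by
      have : c = p := hsp.2.2 j c p hcj hp
      exact this ▸ hrc
    have hF₁ : IsSpForest ε (F'.erase (p, j)) := spForest_subset hsp (Finset.erase_subset _ _)
    have hnoj₁ : ∀ u, (u, j) ∉ F'.erase (p, j) := by
      intro u hu
      have := hsp.2.2 j u p (Finset.mem_erase.1 hu).2 hp
      exact (Finset.mem_erase.1 hu).1 (by rw [this])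
    have hnom₁ : ∀ u, (u, m) ∉ F'.erase (p, j) := fun u hu =>
      hrootm u (Finset.erase_subset _ _ hu)
    have hrmp₁ : Rch (F'.erase (p, j)) m p := by
      rcases reach_erase (p, j) hrmp with h | h
      · exact h
      · exact absurd (rch_mono (Finset.erase_subset _ _) h)
          (not_rch_of_arc hsp.2.1 hp)
    have hins : IsSpForest ε (insert (j, m) (F'.erase (p, j))) :=
      spForest_insert hF₁ hpos hnom₁
        (fun hr => hmj (rch_eq_of_noIn hnoj₁ hr))
    have hk : 0 < k := hcard ▸ Finset.card_pos.2 ⟨_, hp⟩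
    refine ⟨hsp.1 _ hp, mem_forestsKji.2 ⟨⟨hins, ?_⟩, ?_, ?_⟩, ?_⟩
    · rw [Finset.card_insert_of_notMem (hnom₁ j), Finset.card_erase_of_mem hp, hcard]
      omega
    · intro u hu
      rcases Finset.mem_insert.1 hu with he | hu
      · simp only [Prod.mk.injEq] at he
        exact hmj he.2.symm
      · exact hnoj₁ u hu
    · exact Relation.ReflTransGen.refl
    · exact Relation.ReflTransGen.head (Finset.mem_insert_self _ _)
        (rch_mono (Finset.subset_insert _ _) hrmp₁)
  · rintro ⟨p, F⟩ hq
    simp only [Finset.mem_filter, Finset.mem_univ, true_and] at hq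
    obtain ⟨hpos, hF, hrjp⟩ := hq
    obtain ⟨⟨hsp, hcard⟩, hrootj, -⟩ := mem_forestsKji.1 hF
    have hpj : p ≠ j := fun h => by simp [h, hloop j] at hpos
    obtain ⟨hm, hrmp⟩ := childTo_spec (exists_child hrjp (Ne.symm hpj))
    set m := childTo F j p with hmdef
    have hF₀ : IsSpForest ε (F.erase (j, m)) := spForest_subset hsp (Finset.erase_subset _ _)
    have hnoj₀ : ∀ u, (u, j) ∉ F.erase (j, m) := fun u hu => hrootj u (Finset.erase_subset _ _ hu)
    have hnjp₀ : ¬ Rch (F.erase (j, m)) j p := by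
      intro hr
      obtain ⟨m', hm', hrm'⟩ := exists_child hr (Ne.symm hpj)
      have : m' = m := child_unique hsp.2 (Finset.erase_subset _ _ hm') hm
        (rch_mono (Finset.erase_subset _ _) hrm') hrmp
      exact (Finset.mem_erase.1 hm').1 (by rw [this])
    have hins : IsSpForest ε (insert (p, j) (F.erase (j, m))) :=
      spForest_insert hF₀ hpos hnoj₀ hnjp₀
    have hpar : parentOf (insert (p, j) (F.erase (j, m))) j = p :=
      parentOf_eq hins.2 (Finset.mem_insert_self _ _)
    simp only [hpar, Finset.erase_insert (hnoj₀ p), Finset.insert_erase hm]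
  · rintro ⟨m, F'⟩ hq
    simp only [Finset.mem_filter, Finset.mem_univ, true_and] at hq
    obtain ⟨hpos, hF⟩ := hq
    obtain ⟨⟨hsp, hcard⟩, hrootm, hrmj⟩ := mem_forestsKji.1 hF
    have hmj : m ≠ j := fun h => by simp [h, hloop j] at hpos
    obtain ⟨c, hrc, hcj⟩ : ∃ c, Rch F' m c ∧ (c, j) ∈ F' := by
      rcases hrmj.cases_tail with h | h
      · exact absurd h.symm hmj
      · exact h
    have hp : (parentOf F' j, j) ∈ F' := parentOf_spec ⟨c, hcj⟩
    set p := parentOf F' j with hpdef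
    have hrmp : Rch F' m p := by
      have : c = p := hsp.2.2 j c p hcj hp
      exact this ▸ hrc
    have hF₁ : IsSpForest ε (F'.erase (p, j)) := spForest_subset hsp (Finset.erase_subset _ _)
    have hnoj₁ : ∀ u, (u, j) ∉ F'.erase (p, j) := by
      intro u hu
      have := hsp.2.2 j u p (Finset.mem_erase.1 hu).2 hp
      exact (Finset.mem_erase.1 hu).1 (by rw [this])
    have hnom₁ : ∀ u, (u, m) ∉ F'.erase (p, j) := fun u hu =>
      hrootm u (Finset.erase_subset _ _ hu)
    have hrmp₁ : Rch (F'.erase (p, j)) m p := by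
      rcases reach_erase (p, j) hrmp with h | h
      · exact h
      · exact absurd (rch_mono (Finset.erase_subset _ _) h)
          (not_rch_of_arc hsp.2.1 hp)
    have hins : IsSpForest ε (insert (j, m) (F'.erase (p, j))) :=
      spForest_insert hF₁ hpos hnom₁
        (fun hr => hmj (rch_eq_of_noIn hnoj₁ hr))
    have hct : childTo (insert (j, m) (F'.erase (p, j))) j p = m :=
      childTo_eq hins.2 (Finset.mem_insert_self _ _)
        (rch_mono (Finset.subset_insert _ _) hrmp₁)
    simp only [hct, Finset.erase_insert (hnom₁ j), Finset.insert_erase hp]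
  · rintro ⟨p, F⟩ hq
    simp only [Finset.mem_filter, Finset.mem_univ, true_and] at hq
    obtain ⟨hpos, hF, hrjp⟩ := hq
    obtain ⟨⟨hsp, hcard⟩, hrootj, -⟩ := mem_forestsKji.1 hF
    have hpj : p ≠ j := fun h => by simp [h, hloop j] at hpos
    obtain ⟨hm, hrmp⟩ := childTo_spec (exists_child hrjp (Ne.symm hpj))
    set m := childTo F j p with hmdef
    have hnoj₀ : ∀ u, (u, j) ∉ F.erase (j, m) := fun u hu => hrootj u (Finset.erase_subset _ _ hu)
    have h1 : fweight ε (insert (p, j) (F.erase (j, m))) = ε p j * fweight ε (F.erase (j, m)) :=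
      fweight_insert (hnoj₀ p)
    have h2 : ε j m * fweight ε (F.erase (j, m)) = fweight ε F := fweight_erase hm
    simp only [h1]
    rw [← h2]
    ring

/-- Bijection 2: rerooting (i ≠ j, merged case). -/
lemma bij2 (hloop : ∀ i, ε i i = 0) (k : ℕ) {j i : Fin n} (hij : j ≠ i) :
    ∑ q ∈ (Finset.univ.filter (fun q : Fin n × Finset (Fin n × Fin n) =>
        0 < ε q.1 j ∧ q.2 ∈ forestsKji ε k j i)),
      fweight ε q.2 * ε q.1 j
    = ∑ q ∈ (Finset.univ.filter (fun q : Fin n × Finset (Fin n × Fin n) =>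
        0 < ε j q.1 ∧ q.2 ∈ forestsKji ε k q.1 i ∧ ¬ (∀ u, (u, j) ∉ q.2))),
      fweight ε q.2 * ε j q.1 := by
  refine Finset.sum_bij'
    (fun q _ => (childTo q.2 j (if Rch q.2 j q.1 then q.1 else i),
      insert (q.1, j) (q.2.erase (j, childTo q.2 j (if Rch q.2 j q.1 then q.1 else i)))))
    (fun q _ => (parentOf q.2 j, insert (j, q.1) (q.2.erase (parentOf q.2 j, j))))
    ?_ ?_ ?_ ?_ ?_
  · rintro ⟨p, F⟩ hq
    simp only [Finset.mem_filter, Finset.mem_univ, true_and] at hq ⊢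
    obtain ⟨hpos, hF⟩ := hq
    obtain ⟨⟨hsp, hcard⟩, hrootj, hrji⟩ := mem_forestsKji.1 hF
    have hpj : p ≠ j := fun h => by simp [h, hloop j] at hpos
    set t := if Rch F j p then p else i with htdef
    have hrjt : Rch F j t := by
      rw [htdef]; split
      · assumption
      · exact hrji
    have htj : j ≠ t := by
      rw [htdef]; split
      · exact Ne.symm hpj
      · exact hij
    obtain ⟨hm, hrmt⟩ := childTo_spec (exists_child hrjt htj)
    set m := childTo F j t with hmdef
    have hmj : m ≠ j := fun h => no_self_arc hsp.2.1 (h ▸ hm)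
    have hF₀ : IsSpForest ε (F.erase (j, m)) := spForest_subset hsp (Finset.erase_subset _ _)
    have hnoj₀ : ∀ u, (u, j) ∉ F.erase (j, m) := fun u hu => hrootj u (Finset.erase_subset _ _ hu)
    have hnom₀ : ∀ u, (u, m) ∉ F.erase (j, m) := by
      intro u hu
      have := hsp.2.2 m u j (Finset.mem_erase.1 hu).2 hm
      exact (Finset.mem_erase.1 hu).1 (by rw [this])
    have hrmt₀ : Rch (F.erase (j, m)) m t :=
      reach_erase_of_not hrmt (not_rch_of_arc hsp.2.1 hm)
    have hnjp₀ : ¬ Rch (F.erase (j, m)) j p := by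
      intro hr
      by_cases hc : Rch F j p
      · have ht : t = p := by rw [htdef, if_pos hc]
        obtain ⟨m', hm', hrm'⟩ := exists_child hr (Ne.symm hpj)
        have : m' = m := child_unique hsp.2 (Finset.erase_subset _ _ hm') hm
          (rch_mono (Finset.erase_subset _ _) hrm') (ht ▸ hrmt)
        exact (Finset.mem_erase.1 hm').1 (by rw [this])
      · exact hc (rch_mono (Finset.erase_subset _ _) hr)
    have hins : IsSpForest ε (insert (p, j) (F.erase (j, m))) :=
      spForest_insert hF₀ hpos hnoj₀ hnjp₀
    have hk : 0 < k := hcard ▸ Finset.card_pos.2 ⟨_, hm⟩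
    refine ⟨hsp.1 _ hm, mem_forestsKji.2 ⟨⟨hins, ?_⟩, ?_, ?_⟩, ?_⟩
    · rw [Finset.card_insert_of_notMem (hnoj₀ p), Finset.card_erase_of_mem hm, hcard]
      omega
    · intro u hu
      rcases Finset.mem_insert.1 hu with he | hu
      · simp only [Prod.mk.injEq] at he
        exact hmj he.2
      · exact hnom₀ u hu
    · -- Rch (insert (p,j) F₀) m i
      by_cases hc : Rch F j p
      · rcases reach_erase (j, m) hrji with h | h
        · have ht : t = p := by rw [htdef, if_pos hc]
          exact Relation.ReflTransGen.trans
            (Relation.ReflTransGen.tail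
              (rch_mono (Finset.subset_insert _ _) (ht ▸ hrmt₀))
              (Finset.mem_insert_self _ _))
            (rch_mono (Finset.subset_insert _ _) h)
        · exact rch_mono (Finset.subset_insert _ _) h
      · have ht : t = i := by rw [htdef, if_neg hc]
        exact rch_mono (Finset.subset_insert _ _) (ht ▸ hrmt₀)
    · push_neg
      exact ⟨p, Finset.mem_insert_self _ _⟩
  · rintro ⟨m, F'⟩ hq
    simp only [Finset.mem_filter, Finset.mem_univ, true_and] at hq ⊢
    obtain ⟨hpos, hF, hnr⟩ := hq
    obtain ⟨⟨hsp, hcard⟩, hrootm, hrmi⟩ := mem_forestsKji.1 hF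
    have hmj : m ≠ j := fun h => by simp [h, hloop j] at hpos
    push_neg at hnr
    obtain ⟨u, hu⟩ := hnr
    have hp : (parentOf F' j, j) ∈ F' := parentOf_spec ⟨u, hu⟩
    set p := parentOf F' j with hpdef
    have hF₁ : IsSpForest ε (F'.erase (p, j)) := spForest_subset hsp (Finset.erase_subset _ _)
    have hnoj₁ : ∀ u, (u, j) ∉ F'.erase (p, j) := by
      intro u hu
      have := hsp.2.2 j u p (Finset.mem_erase.1 hu).2 hp
      exact (Finset.mem_erase.1 hu).1 (by rw [this])
    have hnom₁ : ∀ u, (u, m) ∉ F'.erase (p, j) := fun u hu =>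
      hrootm u (Finset.erase_subset _ _ hu)
    have hins : IsSpForest ε (insert (j, m) (F'.erase (p, j))) :=
      spForest_insert hF₁ hpos hnom₁
        (fun hr => hmj (rch_eq_of_noIn hnoj₁ hr))
    have hk : 0 < k := hcard ▸ Finset.card_pos.2 ⟨_, hp⟩
    refine ⟨hsp.1 _ hp, mem_forestsKji.2 ⟨⟨hins, ?_⟩, ?_, ?_⟩⟩
    · rw [Finset.card_insert_of_notMem (hnom₁ j), Finset.card_erase_of_mem hp, hcard]
      omega
    · intro u' hu'
      rcases Finset.mem_insert.1 hu' with he | hu'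
      · simp only [Prod.mk.injEq] at he
        exact hmj he.2.symm
      · exact hnoj₁ u' hu'
    · -- Rch (insert (j,m) F₁) j i
      rcases reach_erase (p, j) hrmi with h | h
      · exact Relation.ReflTransGen.head (Finset.mem_insert_self _ _)
          (rch_mono (Finset.subset_insert _ _) h)
      · exact rch_mono (Finset.subset_insert _ _) h
  · rintro ⟨p, F⟩ hq
    simp only [Finset.mem_filter, Finset.mem_univ, true_and] at hq
    obtain ⟨hpos, hF⟩ := hq
    obtain ⟨⟨hsp, hcard⟩, hrootj, hrji⟩ := mem_forestsKji.1 hF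
    have hpj : p ≠ j := fun h => by simp [h, hloop j] at hpos
    set t := if Rch F j p then p else i with htdef
    have hrjt : Rch F j t := by
      rw [htdef]; split
      · assumption
      · exact hrji
    have htj : j ≠ t := by
      rw [htdef]; split
      · exact Ne.symm hpj
      · exact hij
    obtain ⟨hm, hrmt⟩ := childTo_spec (exists_child hrjt htj)
    set m := childTo F j t with hmdef
    have hnoj₀ : ∀ u, (u, j) ∉ F.erase (j, m) := fun u hu => hrootj u (Finset.erase_subset _ _ hu)
    have hnjp₀ : ¬ Rch (F.erase (j, m)) j p := by
      intro hr
      by_cases hc : Rch F j p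
      · have ht : t = p := by rw [htdef, if_pos hc]
        obtain ⟨m', hm', hrm'⟩ := exists_child hr (Ne.symm hpj)
        have : m' = m := child_unique hsp.2 (Finset.erase_subset _ _ hm') hm
          (rch_mono (Finset.erase_subset _ _) hrm') (ht ▸ hrmt)
        exact (Finset.mem_erase.1 hm').1 (by rw [this])
      · exact hc (rch_mono (Finset.erase_subset _ _) hr)
    have hins : IsSpForest ε (insert (p, j) (F.erase (j, m))) :=
      spForest_insert (spForest_subset hsp (Finset.erase_subset _ _)) hpos hnoj₀ hnjp₀
    have hpar : parentOf (insert (p, j) (F.erase (j, m))) j = p :=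
      parentOf_eq hins.2 (Finset.mem_insert_self _ _)
    simp only [hpar, Finset.erase_insert (hnoj₀ p), Finset.insert_erase hm]
  · rintro ⟨m, F'⟩ hq
    simp only [Finset.mem_filter, Finset.mem_univ, true_and] at hq
    obtain ⟨hpos, hF, hnr⟩ := hq
    obtain ⟨⟨hsp, hcard⟩, hrootm, hrmi⟩ := mem_forestsKji.1 hF
    have hmj : m ≠ j := fun h => by simp [h, hloop j] at hpos
    push_neg at hnr
    obtain ⟨u, hu⟩ := hnr
    have hp : (parentOf F' j, j) ∈ F' := parentOf_spec ⟨u, hu⟩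
    set p := parentOf F' j with hpdef
    have hpj : p ≠ j := fun h => no_self_arc hsp.2.1 (h ▸ hp)
    have hF₁ : IsSpForest ε (F'.erase (p, j)) := spForest_subset hsp (Finset.erase_subset _ _)
    have hnoj₁ : ∀ u, (u, j) ∉ F'.erase (p, j) := by
      intro u' hu'
      have := hsp.2.2 j u' p (Finset.mem_erase.1 hu').2 hp
      exact (Finset.mem_erase.1 hu').1 (by rw [this])
    have hnom₁ : ∀ u, (u, m) ∉ F'.erase (p, j) := fun u' hu' =>
      hrootm u' (Finset.erase_subset _ _ hu')
    have hins : IsSpForest ε (insert (j, m) (F'.erase (p, j))) :=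
      spForest_insert hF₁ hpos hnom₁
        (fun hr => hmj (rch_eq_of_noIn hnoj₁ hr))
    set F'' := insert (j, m) (F'.erase (p, j)) with hF''def
    -- key dichotomy
    have keyA : Rch F'' j p → Rch (F'.erase (p, j)) m p := by
      intro h
      rcases reach_insert h with h1 | ⟨-, h2⟩
      · exact absurd (rch_mono (Finset.erase_subset _ _) h1)
          (not_rch_of_arc hsp.2.1 hp)
      · exact h2
    have keyB : Rch (F'.erase (p, j)) m p → Rch F'' j p := fun h =>
      Relation.ReflTransGen.head (Finset.mem_insert_self _ _)
        (rch_mono (Finset.subset_insert _ _) h)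
    have hct : childTo F'' j (if Rch F'' j p then p else i) = m := by
      by_cases hc : Rch F'' j p
      · rw [if_pos hc]
        exact childTo_eq hins.2 (Finset.mem_insert_self _ _)
          (rch_mono (Finset.subset_insert _ _) (keyA hc))
      · rw [if_neg hc]
        have hrmi₁ : Rch (F'.erase (p, j)) m i := by
          rcases reach_erase (p, j) hrmi with h | h
          · exact h
          · -- Rch F₁ j i; derive contradiction
            exfalso
            have hji' : Rch F' j i := rch_mono (Finset.erase_subset _ _) h
            rcases rch_comparable hsp.2.2 hji' m hrmi with hjm | hmjr
            · exact hmj (rch_eq_of_noIn hrootm hjm).symm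
            · rcases hmjr.cases_tail with h1 | ⟨c, hmc, hcj⟩
              · exact hmj h1.symm
              · have hcp : c = p := hsp.2.2 j c p hcj hp
                have hrmp : Rch F' m p := hcp ▸ hmc
                rcases reach_erase (p, j) hrmp with h2 | h2
                · exact hc (keyB h2)
                · exact not_rch_of_arc hsp.2.1 hp (rch_mono (Finset.erase_subset _ _) h2)
        exact childTo_eq hins.2 (Finset.mem_insert_self _ _)
          (rch_mono (Finset.subset_insert _ _) hrmi₁)
    show (childTo F'' j (if Rch F'' j p then p else i),
      insert (p, j) (F''.erase (j, childTo F'' j (if Rch F'' j p then p else i)))) = (m, F')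
    rw [hct, hF''def, Finset.erase_insert (hnom₁ j), Finset.insert_erase hp]
  · rintro ⟨p, F⟩ hq
    simp only [Finset.mem_filter, Finset.mem_univ, true_and] at hq
    obtain ⟨hpos, hF⟩ := hq
    obtain ⟨⟨hsp, hcard⟩, hrootj, hrji⟩ := mem_forestsKji.1 hF
    have hpj : p ≠ j := fun h => by simp [h, hloop j] at hpos
    set t := if Rch F j p then p else i with htdef
    have hrjt : Rch F j t := by
      rw [htdef]; split
      · assumption
      · exact hrji
    have htj : j ≠ t := by
      rw [htdef]; split
      · exact Ne.symm hpj
      · exact hij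
    obtain ⟨hm, hrmt⟩ := childTo_spec (exists_child hrjt htj)
    set m := childTo F j t with hmdef
    have hnoj₀ : ∀ u, (u, j) ∉ F.erase (j, m) := fun u hu => hrootj u (Finset.erase_subset _ _ hu)
    have h1 : fweight ε (insert (p, j) (F.erase (j, m))) = ε p j * fweight ε (F.erase (j, m)) :=
      fweight_insert (hnoj₀ p)
    have h2 : ε j m * fweight ε (F.erase (j, m)) = fweight ε F := fweight_erase hm
    simp only [h1]
    rw [← h2]
    ring

/-- Plumbing: a weighted pair sum as a product. -/
lemma pair_sum (ε : Fin n → Fin n → ℝ) (S : Fin n → Finset (Finset (Fin n × Fin n)))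
    (g : Fin n → ℝ) (hg : ∀ p, 0 ≤ g p) :
    ∑ q ∈ (Finset.univ.filter (fun q : Fin n × Finset (Fin n × Fin n) =>
        0 < g q.1 ∧ q.2 ∈ S q.1)), fweight ε q.2 * g q.1
    = ∑ p, g p * swt ε (S p) := by
  rw [Finset.sum_filter, Fintype.sum_prod_type]
  refine Finset.sum_congr rfl fun p _ => ?_
  by_cases hp : 0 < g p
  · simp only [hp, true_and]
    rw [swt, Finset.mul_sum]
    rw [← Finset.sum_filter]
    refine Finset.sum_nbij' id id ?_ ?_ ?_ ?_ ?_ <;> simp [Finset.mem_filter, mul_comm]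
  · have hg0 : g p = 0 := le_antisymm (not_lt.1 hp) (hg p)
    simp [hp, hg0]

/-- The central recursion `Q_{k+1} = σ_{k+1} I - Q_k L`, entrywise. -/
lemma recursion_entry (hnn : ∀ a b, 0 ≤ ε a b) (hloop : ∀ a, ε a a = 0) (k : ℕ)
    (i j : Fin n) :
    swt ε (forestsKji ε (k+1) j i) + ∑ p, ε p j * swt ε (forestsKji ε k j i)
    = (if i = j then swt ε (forestsK ε (k+1)) else 0)
      + ∑ m, ε j m * swt ε (forestsKji ε k m i) := by
  have hL : ∑ p, ε p j * swt ε (forestsKji ε k j i)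
      = ∑ q ∈ (Finset.univ.filter (fun q : Fin n × Finset (Fin n × Fin n) =>
          0 < ε q.1 j ∧ q.2 ∈ forestsKji ε k j i)), fweight ε q.2 * ε q.1 j :=
    (pair_sum ε _ (fun p => ε p j) (fun p => hnn p j)).symm
  have hR : ∑ m, ε j m * swt ε (forestsKji ε k m i)
      = ∑ q ∈ (Finset.univ.filter (fun q : Fin n × Finset (Fin n × Fin n) =>
          0 < ε j q.1 ∧ q.2 ∈ forestsKji ε k q.1 i)), fweight ε q.2 * ε j q.1 :=
    (pair_sum ε _ (fun m => ε j m) (fun m => hnn j m)).symm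
  rw [hL, hR]
  by_cases hij : i = j
  · subst hij
    -- split LHS pair sum by whether j reaches p
    have hsplitL := Finset.sum_filter_add_sum_filter_not
      (Finset.univ.filter (fun q : Fin n × Finset (Fin n × Fin n) =>
          0 < ε q.1 i ∧ q.2 ∈ forestsKji ε k i i))
      (fun q => Rch q.2 i q.1) (fun q => fweight ε q.2 * ε q.1 i)
    rw [Finset.filter_filter, Finset.filter_filter] at hsplitL
    have e1 : (Finset.univ.filter (fun q : Fin n × Finset (Fin n × Fin n) =>
        (0 < ε q.1 i ∧ q.2 ∈ forestsKji ε k i i) ∧ Rch q.2 i q.1))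
        = (Finset.univ.filter (fun q : Fin n × Finset (Fin n × Fin n) =>
        0 < ε q.1 i ∧ q.2 ∈ forestsKji ε k i i ∧ Rch q.2 i q.1)) := by
      apply Finset.filter_congr; intro x _; tauto
    have e2 : (Finset.univ.filter (fun q : Fin n × Finset (Fin n × Fin n) =>
        (0 < ε q.1 i ∧ q.2 ∈ forestsKji ε k i i) ∧ ¬ Rch q.2 i q.1))
        = (Finset.univ.filter (fun q : Fin n × Finset (Fin n × Fin n) =>
        0 < ε q.1 i ∧ q.2 ∈ forestsKji ε k i i ∧ ¬ Rch q.2 i q.1)) := by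
      apply Finset.filter_congr; intro x _; tauto
    rw [e1, e2] at hsplitL
    -- split σ by whether i is a root
    have hsplitσ := Finset.sum_filter_add_sum_filter_not (forestsK ε (k+1))
      (fun G => ∀ u, (u, i) ∉ G) (fun G => fweight ε G)
    have hKJI : forestsKji ε (k+1) i i = (forestsK ε (k+1)).filter (fun G => ∀ u, (u, i) ∉ G) := by
      apply Finset.filter_congr
      intro G _
      simp only [and_iff_left_iff_imp]
      exact fun _ => Relation.ReflTransGen.refl
    have b3 := bij3 (ε := ε) hloop k i
    have b4 := bij4 (ε := ε) hloop k i
    rw [← hsplitL, b3, b4, hKJI, if_pos rfl]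
    simp only [swt]
    rw [← hsplitσ]
    ring
  · have hji : j ≠ i := fun h => hij h.symm
    have hsplitR := Finset.sum_filter_add_sum_filter_not
      (Finset.univ.filter (fun q : Fin n × Finset (Fin n × Fin n) =>
          0 < ε j q.1 ∧ q.2 ∈ forestsKji ε k q.1 i))
      (fun q => ∀ u, (u, j) ∉ q.2) (fun q => fweight ε q.2 * ε j q.1)
    rw [Finset.filter_filter, Finset.filter_filter] at hsplitR
    have e1 : (Finset.univ.filter (fun q : Fin n × Finset (Fin n × Fin n) =>
        (0 < ε j q.1 ∧ q.2 ∈ forestsKji ε k q.1 i) ∧ ∀ u, (u, j) ∉ q.2))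
        = (Finset.univ.filter (fun q : Fin n × Finset (Fin n × Fin n) =>
        0 < ε j q.1 ∧ q.2 ∈ forestsKji ε k q.1 i ∧ ∀ u, (u, j) ∉ q.2)) := by
      apply Finset.filter_congr; intro x _; tauto
    have e2 : (Finset.univ.filter (fun q : Fin n × Finset (Fin n × Fin n) =>
        (0 < ε j q.1 ∧ q.2 ∈ forestsKji ε k q.1 i) ∧ ¬ ∀ u, (u, j) ∉ q.2))
        = (Finset.univ.filter (fun q : Fin n × Finset (Fin n × Fin n) =>
        0 < ε j q.1 ∧ q.2 ∈ forestsKji ε k q.1 i ∧ ¬ ∀ u, (u, j) ∉ q.2)) := by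
      apply Finset.filter_congr; intro x _; tauto
    rw [e1, e2] at hsplitR
    have b1 := bij1 (ε := ε) hloop k hji
    have b2 := bij2 (ε := ε) hloop k hji
    rw [if_neg hij, ← hsplitR, ← b1, ← b2, swt]
    ring

lemma empty_spForest : IsSpForest ε (∅ : Finset (Fin n × Fin n)) := by
  refine ⟨fun p hp => absurd hp (Finset.notMem_empty _), fun v hv => ?_,
    fun w z₁ z₂ h1 _ => absurd h1 (Finset.notMem_empty _)⟩
  cases hv with
  | single h => exact absurd h (Finset.notMem_empty _)
  | tail _ h => exact absurd h (Finset.notMem_empty _)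

lemma forestsK_zero : forestsK ε 0 = {∅} := by
  ext F
  simp only [mem_forestsK, Finset.mem_singleton, Finset.card_eq_zero]
  constructor
  · rintro ⟨-, h⟩; exact h
  · rintro rfl; exact ⟨empty_spForest, rfl⟩

lemma swt_forestsK_zero : swt ε (forestsK ε 0) = 1 := by
  rw [forestsK_zero, swt, Finset.sum_singleton, fweight, Finset.prod_empty]

lemma forestsKji_zero (j i : Fin n) :
    forestsKji ε 0 j i = if i = j then {∅} else ∅ := by
  rw [forestsKji, forestsK_zero]
  split
  · rename_i h
    subst h
    ext F
    simp only [Finset.mem_filter, Finset.mem_singleton]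
    constructor
    · rintro ⟨rfl, -⟩; rfl
    · rintro rfl
      exact ⟨rfl, fun u => Finset.notMem_empty _, Relation.ReflTransGen.refl⟩
  · rename_i h
    ext F
    simp only [Finset.mem_filter, Finset.mem_singleton, Finset.notMem_empty, iff_false]
    rintro ⟨rfl, -, hr⟩
    rcases hr.cases_head with h1 | ⟨c, hc, -⟩
    · exact h h1.symm
    · exact absurd hc (Finset.notMem_empty _)

lemma QM_zero : (Matrix.of fun i j => swt ε (forestsKji ε 0 j i))
    = (1 : Matrix (Fin n) (Fin n) ℝ) := by
  ext i j
  rw [Matrix.of_apply, forestsKji_zero, Matrix.one_apply]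
  split
  · rw [swt, Finset.sum_singleton, fweight, Finset.prod_empty]
  · rw [swt, Finset.sum_empty]

lemma forestsK_gt : forestsK ε (maxArcs ε + 1) = ∅ := by
  rw [Finset.eq_empty_iff_forall_notMem]
  intro F hF
  obtain ⟨hsp, hcard⟩ := mem_forestsK.1 hF
  have : F.card ≤ maxArcs ε :=
    Finset.le_sup (f := Finset.card) (Finset.mem_filter.2 ⟨Finset.mem_univ F, hsp⟩)
  omega

lemma forestsKji_gt (j i : Fin n) : forestsKji ε (maxArcs ε + 1) j i = ∅ := by
  rw [forestsKji, forestsK_gt, Finset.filter_empty]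

/-- The matrix recursion. -/
lemma rec_mat (hnn : ∀ a b, 0 ≤ ε a b) (hloop : ∀ a, ε a a = 0) (k : ℕ) :
    (Matrix.of fun i j => swt ε (forestsKji ε (k+1) j i))
    = swt ε (forestsK ε (k+1)) • (1 : Matrix (Fin n) (Fin n) ℝ)
      - (Matrix.of fun i j => swt ε (forestsKji ε k j i)) * Kirchhoff ε := by
  ext i j
  have key := recursion_entry (ε := ε) hnn hloop k i j
  have hKd : Kirchhoff ε j j = ∑ p ∈ Finset.univ.erase j, ε p j := by
    rw [Kirchhoff, Matrix.of_apply, if_pos rfl, Finset.filter_ne']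
  have hKo : ∀ m ∈ Finset.univ.erase j, Kirchhoff ε m j = - ε j m := by
    intro m hm
    rw [Kirchhoff, Matrix.of_apply, if_neg (Finset.mem_erase.1 hm).1]
  have hprod : ∑ m, swt ε (forestsKji ε k m i) * Kirchhoff ε m j
      = ∑ p, ε p j * swt ε (forestsKji ε k j i) - ∑ m, ε j m * swt ε (forestsKji ε k m i) := by
    have e1 : ∑ m, swt ε (forestsKji ε k m i) * Kirchhoff ε m j
        = swt ε (forestsKji ε k j i) * (∑ p ∈ Finset.univ.erase j, ε p j)
          + ∑ m ∈ Finset.univ.erase j, swt ε (forestsKji ε k m i) * (- ε j m) := by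
      rw [← Finset.add_sum_erase Finset.univ _ (Finset.mem_univ j)]
      congr 1
      · rw [hKd]
      · exact Finset.sum_congr rfl fun m hm => by rw [hKo m hm]
    have e2 : ∑ p, ε p j * swt ε (forestsKji ε k j i)
        = ∑ p ∈ Finset.univ.erase j, ε p j * swt ε (forestsKji ε k j i) := by
      rw [← Finset.add_sum_erase Finset.univ _ (Finset.mem_univ j), hloop j, zero_mul, zero_add]
    have e3 : ∑ m, ε j m * swt ε (forestsKji ε k m i)
        = ∑ m ∈ Finset.univ.erase j, ε j m * swt ε (forestsKji ε k m i) := by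
      rw [← Finset.add_sum_erase Finset.univ _ (Finset.mem_univ j), hloop j, zero_mul, zero_add]
    rw [e1, e2, e3, Finset.mul_sum, ← Finset.sum_sub_distrib, ← Finset.sum_add_distrib]
    exact Finset.sum_congr rfl fun m _ => by ring
  rw [Matrix.sub_apply, Matrix.smul_apply, Matrix.one_apply, Matrix.mul_apply]
  simp only [Matrix.of_apply]
  rw [hprod]
  by_cases hij : i = j
  · rw [if_pos hij] at key ⊢
    rw [smul_eq_mul, mul_one]
    linarith
  · rw [if_neg hij] at key ⊢
    rw [smul_eq_mul, mul_zero]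
    linarith

lemma QK_zero (hnn : ∀ a b, 0 ≤ ε a b) (hloop : ∀ a, ε a a = 0) :
    Qmax ε * Kirchhoff ε = 0 := by
  have h := rec_mat (ε := ε) hnn hloop (maxArcs ε)
  have h0 : (Matrix.of fun i j => swt ε (forestsKji ε (maxArcs ε + 1) j i))
      = (0 : Matrix (Fin n) (Fin n) ℝ) := by
    ext i j
    rw [Matrix.of_apply, forestsKji_gt, swt, Finset.sum_empty, Matrix.zero_apply]
  have hσ : swt ε (forestsK ε (maxArcs ε + 1)) = 0 := by
    rw [forestsK_gt, swt, Finset.sum_empty]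
  rw [h0, hσ, zero_smul] at h
  have : Qmax ε = (Matrix.of fun i j => swt ε (forestsKji ε (maxArcs ε) j i)) := rfl
  rw [this]
  rw [zero_sub] at h
  exact neg_eq_zero.1 h.symm

lemma QQ_step (hnn : ∀ a b, 0 ≤ ε a b) (hloop : ∀ a, ε a a = 0) (k : ℕ) :
    Qmax ε * (Matrix.of fun i j => swt ε (forestsKji ε k j i))
    = swt ε (forestsK ε k) • Qmax ε := by
  induction k with
  | zero => rw [QM_zero, swt_forestsK_zero, Matrix.mul_one, one_smul]
  | succ k ih =>
    rw [rec_mat hnn hloop k, Matrix.mul_sub, Matrix.mul_smul, Matrix.mul_one,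
      ← Matrix.mul_assoc, ih, Matrix.smul_mul, QK_zero hnn hloop, smul_zero, sub_zero]

lemma sigma_pos (hnn : ∀ a b, 0 ≤ ε a b) : 0 < swt ε (forestsK ε (maxArcs ε)) := by
  have hne : (Finset.univ.filter (fun F : Finset (Fin n × Fin n) => IsSpForest ε F)).Nonempty :=
    ⟨∅, Finset.mem_filter.2 ⟨Finset.mem_univ _, empty_spForest⟩⟩
  obtain ⟨F, hF, hsup⟩ := Finset.exists_mem_eq_sup _ hne Finset.card
  have hFm : F ∈ forestsK ε (maxArcs ε) :=
    mem_forestsK.2 ⟨(Finset.mem_filter.1 hF).2, hsup.symm⟩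
  refine Finset.sum_pos ?_ ⟨F, hFm⟩
  intro G hG
  exact Finset.prod_pos fun p hp => (mem_forestsK.1 hG).1.1 p hp

end Ca

/-- The normalized matrix of maximum out forests is idempotent. -/
theorem stmt16 (ε : Fin n → Fin n → ℝ) (hnonneg : ∀ i j, 0 ≤ ε i j)
    (hloop : ∀ i, ε i i = 0) :
    Jbar ε * Jbar ε = Jbar ε := by
  have hq : Qmax ε * Qmax ε = swt ε (forestsK ε (maxArcs ε)) • Qmax ε :=
    Ca.QQ_step (ε := ε) hnonneg hloop (maxArcs ε)
  have hσ : swt ε (forestsK ε (maxArcs ε)) ≠ 0 := (Ca.sigma_pos (ε := ε) hnonneg).ne'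
  rw [Jbar, Matrix.smul_mul, Matrix.mul_smul, hq, smul_smul, smul_smul]
  congr 1
  field_simp
end
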